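/- arXiv:1511.06525 — 7 statements merged into one kernel-verified Lean document; each statement's English description precedes it below -/
import Mathlib

section
/- Consider the block model with treatments 0,1,…,n (placebo and n ≥ 2 doses) and t cohorts, with NO dose-escalation constraints: a design is any function ξ : {0,…,n}×{1,…,t} → ℝ with ξ(i,k) ≥ 0 and ∑_{i,k} ξ(i,k) = 1. If a design ξ maximizes λ_min(N_A(ξ)) among all such designs, then its treatment proportions satisfy r_0(ξ) = 1/2 and r_i(ξ) = 1/(2n) for every i = 1,…,n. -/
noncomputable section

open Matrix Finset

/-- An approximate design on treatments 0,…,n and cohorts 1,…,t: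
nonnegative weights summing to 1. -/
def isDesign (n t : ℕ) (ξ : Fin (n+1) → Fin t → ℝ) : Prop :=
  (∀ i k, 0 ≤ ξ i k) ∧ ∑ i, ∑ k, ξ i k = 1

/-- Treatment proportions r_i(ξ). -/
def repl (n t : ℕ) (ξ : Fin (n+1) → Fin t → ℝ) (i : Fin (n+1)) : ℝ := ∑ k, ξ i k

/-- Cohort proportions s_k(ξ). -/
def coh (n t : ℕ) (ξ : Fin (n+1) → Fin t → ℝ) (k : Fin t) : ℝ := ∑ i, ξ i k

/-- The information matrix N_A(ξ) for comparing the doses with the placebo: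
the n×n submatrix of M_τ(ξ) = diag(r(ξ)) − X(ξ) D(ξ) X(ξ)^T obtained by deleting
the row and column of treatment 0, where D(ξ) has k-th diagonal entry 1/s_k(ξ)
if s_k(ξ) > 0 and 0 otherwise. -/
def NAgen (n t : ℕ) (ξ : Fin (n+1) → Fin t → ℝ) : Matrix (Fin n) (Fin n) ℝ :=
  fun i j => (if i = j then repl n t ξ i.succ else 0) -
    ∑ k, (if 0 < coh n t ξ k then (coh n t ξ k)⁻¹ else 0) * (ξ i.succ k * ξ j.succ k)

/-- Smallest eigenvalue of a real symmetric matrix, via the Rayleigh quotient. -/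
def lambdaMin {m : ℕ} (A : Matrix (Fin m) (Fin m) ℝ) : ℝ :=
  sInf { r : ℝ | ∃ x : Fin m → ℝ, ∑ i, x i ^ 2 = 1 ∧ r = ∑ i, ∑ j, x i * A i j * x j }

/-! ### Auxiliary lemmas -/

lemma cs_wt {t : ℕ} (s b : Fin t → ℝ) (hs : ∀ k, 0 ≤ s k) (hsum : ∑ k, s k = 1)
    (hz : ∀ k, s k = 0 → b k = 0) :
    (∑ k, b k)^2 ≤ ∑ k, (if 0 < s k then (s k)⁻¹ else 0) * (b k)^2 := by
  set f : Fin t → ℝ := fun k => Real.sqrt (s k) with hf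
  set g : Fin t → ℝ := fun k => if 0 < s k then b k / Real.sqrt (s k) else 0 with hg
  have h1 : ∀ k, b k = f k * g k := by
    intro k
    rcases lt_or_eq_of_le (hs k) with h | h
    · have hsq : Real.sqrt (s k) ≠ 0 := by positivity
      simp only [hf, hg, if_pos h]
      field_simp
    · simp [hf, hg, ← h, hz k h.symm]
  have h2 : ∑ k, f k ^ 2 = 1 := by
    rw [← hsum]; exact Finset.sum_congr rfl fun k _ => Real.sq_sqrt (hs k)
  have h3 : ∀ k, g k ^ 2 = (if 0 < s k then (s k)⁻¹ else 0) * (b k)^2 := by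
    intro k
    rcases lt_or_eq_of_le (hs k) with h | h
    · simp only [hg, if_pos h]
      rw [div_pow, Real.sq_sqrt (hs k)]
      field_simp
    · simp [hg, ← h]
  calc (∑ k, b k)^2 = (∑ k, f k * g k)^2 := by rw [Finset.sum_congr rfl fun k _ => h1 k]
    _ ≤ (∑ k, f k ^2) * (∑ k, g k ^2) := Finset.sum_mul_sq_le_sq_mul_sq _ _ _
    _ = ∑ k, (if 0 < s k then (s k)⁻¹ else 0) * (b k)^2 := by
        rw [h2, one_mul]; exact Finset.sum_congr rfl fun k _ => h3 k

lemma quad_form (n t : ℕ) (ξ : Fin (n+1) → Fin t → ℝ) (x : Fin n → ℝ) :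
    ∑ i, ∑ j, x i * NAgen n t ξ i j * x j
      = ∑ i, repl n t ξ i.succ * x i ^ 2
        - ∑ k, (if 0 < coh n t ξ k then (coh n t ξ k)⁻¹ else 0) * (∑ i, x i * ξ i.succ k)^2 := by
  set c : Fin t → ℝ := fun k => if 0 < coh n t ξ k then (coh n t ξ k)⁻¹ else 0 with hc
  set a : Fin n → Fin t → ℝ := fun i k => x i * ξ i.succ k with ha
  have e1 : ∀ i j, x i * NAgen n t ξ i j * x j
      = (if i = j then repl n t ξ i.succ * x i ^2 else 0)
        - ∑ k, c k * (a i k * a j k) := by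
    intro i j
    simp only [NAgen, sub_mul, mul_sub, Finset.mul_sum, Finset.sum_mul, ha, hc]
    congr 1
    · by_cases h : i = j
      · simp [h]; ring
      · simp [h]
    · exact Finset.sum_congr rfl fun k _ => by ring
  have h2 : ∑ k, c k * (∑ i, a i k)^2 = ∑ i, ∑ j, ∑ k, c k * (a i k * a j k) := by
    have : ∀ k, c k * (∑ i, a i k)^2 = ∑ i, ∑ j, c k * (a i k * a j k) := by
      intro k
      rw [sq, Finset.sum_mul_sum, Finset.mul_sum]
      exact Finset.sum_congr rfl fun i _ => by rw [Finset.mul_sum]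
    rw [Finset.sum_congr rfl fun k _ => this k, Finset.sum_comm]
    exact Finset.sum_congr rfl fun i _ => Finset.sum_comm
  simp only [e1, Finset.sum_sub_distrib, h2]
  congr 1
  simp [Finset.sum_ite_eq]
  exact h2.symm

lemma rayleigh_bddBelow {m : ℕ} (A : Matrix (Fin m) (Fin m) ℝ) :
    BddBelow { r : ℝ | ∃ x : Fin m → ℝ, ∑ i, x i ^ 2 = 1 ∧ r = ∑ i, ∑ j, x i * A i j * x j } := by
  refine ⟨-(∑ i, ∑ j, |A i j|), ?_⟩
  rintro r ⟨x, hx, rfl⟩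
  have hxi : ∀ i, |x i| ≤ 1 := by
    intro i
    have h1 : x i ^ 2 ≤ 1 := hx ▸ Finset.single_le_sum (fun j _ => sq_nonneg (x j)) (mem_univ i)
    nlinarith [abs_nonneg (x i), sq_abs (x i)]
  have key : ∀ i j, -(|A i j|) ≤ x i * A i j * x j := by
    intro i j
    have h1 : |x i * A i j * x j| ≤ |A i j| := by
      rw [abs_mul, abs_mul]
      calc |x i| * |A i j| * |x j| ≤ 1 * |A i j| * 1 := by
            apply mul_le_mul (mul_le_mul (hxi i) le_rfl (abs_nonneg _) zero_le_one) (hxi j)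
              (abs_nonneg _) (by positivity)
        _ = |A i j| := by ring
    linarith [neg_abs_le (x i * A i j * x j)]
  calc -(∑ i, ∑ j, |A i j|) = ∑ i, ∑ j, -(|A i j|) := by simp
    _ ≤ ∑ i, ∑ j, x i * A i j * x j :=
        Finset.sum_le_sum fun i _ => Finset.sum_le_sum fun j _ => key i j

lemma lambdaMin_le {m : ℕ} (A : Matrix (Fin m) (Fin m) ℝ) (x : Fin m → ℝ)
    (hx : ∑ i, x i ^ 2 = 1) : lambdaMin A ≤ ∑ i, ∑ j, x i * A i j * x j :=
  csInf_le (rayleigh_bddBelow A) ⟨x, hx, rfl⟩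

lemma lambdaMin_ge {m : ℕ} (hm : 0 < m) (A : Matrix (Fin m) (Fin m) ℝ) (c : ℝ)
    (h : ∀ x : Fin m → ℝ, ∑ i, x i ^ 2 = 1 → c ≤ ∑ i, ∑ j, x i * A i j * x j) :
    c ≤ lambdaMin A := by
  have hne : ∃ x : Fin m → ℝ, ∑ i, x i ^ 2 = 1 := by
    refine ⟨fun j => if j = ⟨0, hm⟩ then 1 else 0, ?_⟩
    simp [apply_ite (·^2), Finset.sum_ite_eq']
  obtain ⟨x, hx⟩ := hne
  refine le_csInf ⟨_, x, hx, rfl⟩ ?_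
  rintro r ⟨y, hy, rfl⟩
  exact h y hy

section Design

variable {n t : ℕ} {ξ : Fin (n+1) → Fin t → ℝ}

lemma coh_nonneg (hξ : isDesign n t ξ) (k : Fin t) : 0 ≤ coh n t ξ k :=
  Finset.sum_nonneg fun i _ => hξ.1 i k

lemma coh_sum (hξ : isDesign n t ξ) : ∑ k, coh n t ξ k = 1 := by
  rw [← hξ.2]; exact Finset.sum_comm

lemma coh_zero (hξ : isDesign n t ξ) {k : Fin t} (h : coh n t ξ k = 0) (i : Fin (n+1)) :
    ξ i k = 0 :=
  (Finset.sum_eq_zero_iff_of_nonneg (fun i _ => hξ.1 i k)).mp h i (mem_univ i)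

/-- Key upper bound for unit vectors. -/
lemma ub_unit (hξ : isDesign n t ξ) (x : Fin n → ℝ) (hx : ∑ i, x i ^ 2 = 1) :
    lambdaMin (NAgen n t ξ) ≤ ∑ i, repl n t ξ i.succ * x i ^ 2
      - (∑ i, x i * repl n t ξ i.succ)^2 := by
  refine le_trans (lambdaMin_le _ x hx) ?_
  rw [quad_form]
  have hb : ∑ k, (∑ i, x i * ξ i.succ k) = ∑ i, x i * repl n t ξ i.succ := by
    rw [Finset.sum_comm]
    exact Finset.sum_congr rfl fun i _ => by rw [repl, Finset.mul_sum]
  have := cs_wt (coh n t ξ) (fun k => ∑ i, x i * ξ i.succ k) (coh_nonneg hξ) (coh_sum hξ)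
    (fun k hk => Finset.sum_eq_zero fun i _ => by rw [coh_zero hξ hk, mul_zero])
  rw [hb] at this
  linarith

/-- Key upper bound, scaled version. -/
lemma ub_scaled (hξ : isDesign n t ξ) (x : Fin n → ℝ) :
    lambdaMin (NAgen n t ξ) * (∑ i, x i ^ 2) ≤ ∑ i, repl n t ξ i.succ * x i ^ 2
      - (∑ i, x i * repl n t ξ i.succ)^2 := by
  by_cases h : ∑ i, x i ^ 2 = 0
  · have hx0 : ∀ i, x i = 0 := by
      intro i
      have := (Finset.sum_eq_zero_iff_of_nonneg (fun j _ => sq_nonneg (x j))).mp h i (mem_univ i)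
      exact (pow_eq_zero_iff two_ne_zero).mp this
    simp [h, hx0]
  · have hpos : 0 < ∑ i, x i ^ 2 :=
      lt_of_le_of_ne (Finset.sum_nonneg fun i _ => sq_nonneg _) (Ne.symm h)
    set cc : ℝ := ∑ i, x i ^ 2 with hcc
    have hsq : Real.sqrt cc ^ 2 = cc := Real.sq_sqrt hpos.le
    have hsqpos : 0 < Real.sqrt cc := Real.sqrt_pos.mpr hpos
    set u : Fin n → ℝ := fun i => x i / Real.sqrt cc with hu
    have hu1 : ∑ i, u i ^ 2 = 1 := by
      simp only [hu, div_pow, hsq]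
      rw [← Finset.sum_div, ← hcc, div_self hpos.ne']
    have h1 := ub_unit hξ u hu1
    have h2 : ∑ i, repl n t ξ i.succ * u i ^ 2 = (∑ i, repl n t ξ i.succ * x i ^ 2) / cc := by
      simp only [hu, div_pow, hsq]
      rw [Finset.sum_div]
      exact Finset.sum_congr rfl fun i _ => by ring
    have h3 : (∑ i, u i * repl n t ξ i.succ)^2 = (∑ i, x i * repl n t ξ i.succ)^2 / cc := by
      have : ∑ i, u i * repl n t ξ i.succ = (∑ i, x i * repl n t ξ i.succ) / Real.sqrt cc := by
        rw [Finset.sum_div]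
        exact Finset.sum_congr rfl fun i _ => by simp only [hu]; ring
      rw [this, div_pow, hsq]
    rw [h2, h3, ← sub_div, le_div_iff₀ hpos] at h1
    linarith
end Design


lemma lb_star (n t : ℕ) (hn : 2 ≤ n) (ht : 1 ≤ t) :
    ∃ ξs : Fin (n+1) → Fin t → ℝ, isDesign n t ξs ∧
      1/(4*(n:ℝ)) ≤ lambdaMin (NAgen n t ξs) := by
  have hn0 : (0:ℝ) < n := by exact_mod_cast lt_of_lt_of_le two_pos hn
  set k0 : Fin t := ⟨0, ht⟩ with hk0
  set ξs : Fin (n+1) → Fin t → ℝ :=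
    fun i k => if k = k0 then (if i = (0 : Fin (n+1)) then (1:ℝ)/2 else 1/(2*n)) else 0 with hξs
  have hsum_i : ∑ i : Fin (n+1), (if i = (0 : Fin (n+1)) then (1:ℝ)/2 else 1/(2*n)) = 1 := by
    rw [Fin.sum_univ_succ]
    simp only [if_pos rfl, Fin.succ_ne_zero, if_neg, ite_false]
    rw [Finset.sum_const, Finset.card_univ, Fintype.card_fin, nsmul_eq_mul]
    field_simp
    norm_num
  have hdes : isDesign n t ξs := by
    constructor
    · intro i k
      simp only [hξs]
      split_ifs <;> positivity
    · simp only [hξs]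
      calc ∑ i : Fin (n+1), ∑ k : Fin t,
            (if k = k0 then (if i = (0:Fin (n+1)) then (1:ℝ)/2 else 1/(2*n)) else 0)
          = ∑ i : Fin (n+1), (if i = (0:Fin (n+1)) then (1:ℝ)/2 else 1/(2*n)) := by
            refine Finset.sum_congr rfl fun i _ => ?_
            rw [Finset.sum_ite_eq' univ k0]
            simp
        _ = 1 := hsum_i
  have hcoh : ∀ k, coh n t ξs k = if k = k0 then 1 else 0 := by
    intro k
    by_cases hk : k = k0
    · simp only [coh, hξs, hk, if_pos rfl, ite_true]
      simpa using hsum_i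
    · simp [coh, hξs, hk]
  have hrepl : ∀ i : Fin n, repl n t ξs i.succ = 1/(2*n) := by
    intro i
    simp only [repl, hξs]
    rw [Finset.sum_ite_eq' univ k0]
    simp [Fin.succ_ne_zero]
  refine ⟨ξs, hdes, lambdaMin_ge (lt_of_lt_of_le two_pos hn) _ _ ?_⟩
  intro x hx
  rw [quad_form]
  have e1 : ∑ i, repl n t ξs i.succ * x i ^ 2 = 1/(2*n) := by
    simp only [hrepl]
    rw [← Finset.mul_sum, hx, mul_one]
  have e2 : ∑ k, (if 0 < coh n t ξs k then (coh n t ξs k)⁻¹ else 0) * (∑ i, x i * ξs i.succ k)^2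
      = ((∑ i, x i) * (1/(2*(n:ℝ))))^2 := by
    have hterm : ∀ k, (if 0 < coh n t ξs k then (coh n t ξs k)⁻¹ else 0)
        * (∑ i, x i * ξs i.succ k)^2
        = if k = k0 then ((∑ i, x i) * (1/(2*(n:ℝ))))^2 else 0 := by
      intro k
      by_cases hk : k = k0
      · rw [hcoh k]
        simp only [hk, ite_true, hξs, if_pos rfl, Fin.succ_ne_zero, ite_false]
        rw [← Finset.sum_mul]
        norm_num
      · rw [hcoh k]
        simp [hk, hξs]
    rw [Finset.sum_congr rfl fun k _ => hterm k, Finset.sum_ite_eq' univ k0]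
    simp
  rw [e1, e2]
  have hS : (∑ i, x i)^2 ≤ (n:ℝ) := by
    have h := sq_sum_le_card_mul_sum_sq (s := (univ : Finset (Fin n))) (f := x)
    rw [hx, Finset.card_univ, Fintype.card_fin, mul_one] at h
    exact_mod_cast h
  have key : 1/(2*(n:ℝ)) - ((∑ i, x i)*(1/(2*(n:ℝ))))^2 - 1/(4*(n:ℝ))
      = ((n:ℝ) - (∑ i, x i)^2)/(4*(n:ℝ)^2) := by
    field_simp
    ring
  have hnn : 0 ≤ ((n:ℝ) - (∑ i, x i)^2)/(4*(n:ℝ)^2) :=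
    div_nonneg (by linarith) (by positivity)
  linarith [key ▸ hnn]

set_option maxHeartbeats 1000000 in
/-- If a design maximizes λ_min(N_A(·)) among all designs (no dose-escalation
constraints), then r_0 = 1/2 and r_i = 1/(2n) for i = 1,…,n. -/
theorem stmt0 (n t : ℕ) (hn : 2 ≤ n) (ht : 1 ≤ t)
    (ξ : Fin (n+1) → Fin t → ℝ) (hξ : isDesign n t ξ)
    (hopt : ∀ ξ' : Fin (n+1) → Fin t → ℝ, isDesign n t ξ' →
      lambdaMin (NAgen n t ξ') ≤ lambdaMin (NAgen n t ξ)) :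
    repl n t ξ 0 = 1 / 2 ∧ ∀ i : Fin n, repl n t ξ i.succ = 1 / (2 * n) := by
  have hn0 : (0:ℝ) < n := by exact_mod_cast lt_of_lt_of_le two_pos hn
  obtain ⟨ξs, hdes, hlb⟩ := lb_star n t hn ht
  set L : ℝ := lambdaMin (NAgen n t ξ) with hL
  have hLlb : 1/(4*(n:ℝ)) ≤ L := le_trans hlb (hopt ξs hdes)
  set ρ : Fin n → ℝ := fun i => repl n t ξ i.succ with hρ
  have hub : ∀ x : Fin n → ℝ, L * (∑ i, x i ^ 2) ≤ ∑ i, ρ i * x i ^ 2 - (∑ i, x i * ρ i)^2 :=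
    fun x => ub_scaled hξ x
  set R : ℝ := ∑ i, ρ i with hR
  -- step 1 : R = 1/2
  have step1 : R = 1/2 := by
    have h1 := hub (fun _ => 1)
    simp only [one_pow, mul_one, one_mul] at h1
    rw [Finset.sum_const, Finset.card_univ, Fintype.card_fin, nsmul_eq_mul, mul_one] at h1
    -- h1 : L * n ≤ R - R^2
    have h2 : 1/(4*(n:ℝ)) * n ≤ L * n := mul_le_mul_of_nonneg_right hLlb hn0.le
    have h3 : 1/(4*(n:ℝ)) * n = 1/4 := by field_simp
    have h4 : (R - 1/2)^2 ≤ 0 := by nlinarith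
    have h5 : (R - 1/2)^2 = 0 := le_antisymm h4 (sq_nonneg _)
    have h6 : R - 1/2 = 0 := by
      exact pow_eq_zero_iff two_ne_zero |>.mp h5
    linarith
  have htot : repl n t ξ 0 + R = 1 := by
    have : ∑ i : Fin (n+1), repl n t ξ i = 1 := hξ.2
    rwa [Fin.sum_univ_succ] at this
  refine ⟨by linarith, ?_⟩
  -- step 2 : all ρ i equal
  set d : Fin n → ℝ := fun i => ρ i - 1/(2*(n:ℝ)) with hd
  set v : ℝ := ∑ i, d i ^ 2 with hv
  set W : ℝ := ∑ i, ρ i * d i ^ 2 with hW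
  have hdsum : ∑ i, d i = 0 := by
    simp only [hd]
    rw [Finset.sum_sub_distrib, Finset.sum_const, Finset.card_univ, Fintype.card_fin,
      nsmul_eq_mul, ← hR, step1]
    field_simp
    norm_num
  have hρd : ∑ i, ρ i * d i = v := by
    have : ∀ i, ρ i * d i = d i ^ 2 + (1/(2*(n:ℝ))) * d i := by
      intro i
      simp only [hd]
      ring
    rw [Finset.sum_congr rfl fun i _ => this i, Finset.sum_add_distrib, ← Finset.mul_sum,
      hdsum, mul_zero, add_zero, hv]
  have hvnn : 0 ≤ v := Finset.sum_nonneg fun i _ => sq_nonneg _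
  have key : ∀ δ : ℝ, 0 < δ → v ≤ δ * (W - v^2) := by
    intro δ hδ
    have h1 := hub (fun i => 1 - δ * d i)
    have e1 : ∑ i, (1 - δ * d i)^2 = (n:ℝ) - 2*δ*(∑ i, d i) + δ^2 * v := by
      have : ∀ i, (1 - δ * d i)^2 = 1 - 2*δ*(d i) + δ^2 * (d i ^2) := fun i => by ring
      rw [Finset.sum_congr rfl fun i _ => this i]
      rw [Finset.sum_add_distrib, Finset.sum_sub_distrib, Finset.sum_const, Finset.card_univ,
        Fintype.card_fin, nsmul_eq_mul, mul_one, ← Finset.mul_sum, ← Finset.mul_sum, hv]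
    have e2 : ∑ i, ρ i * (1 - δ * d i)^2 = R - 2*δ*v + δ^2 * W := by
      have : ∀ i, ρ i * (1 - δ * d i)^2
          = ρ i - 2*δ*(ρ i * d i) + δ^2 * (ρ i * d i ^2) := fun i => by ring
      rw [Finset.sum_congr rfl fun i _ => this i]
      rw [Finset.sum_add_distrib, Finset.sum_sub_distrib, ← Finset.mul_sum, ← Finset.mul_sum,
        hρd, ← hR, ← hW]
    have e3 : ∑ i, (1 - δ * d i) * ρ i = R - δ * v := by
      have : ∀ i, (1 - δ * d i) * ρ i = ρ i - δ * (ρ i * d i) := fun i => by ring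
      rw [Finset.sum_congr rfl fun i _ => this i]
      rw [Finset.sum_sub_distrib, ← Finset.mul_sum, hρd, ← hR]
    rw [e1, e2, e3, hdsum, step1] at h1
    have e4 : L * ((n:ℝ) - 2*δ*0 + δ^2*v) = L * ((n:ℝ) + δ^2*v) := by ring
    rw [e4] at h1
    -- h1 : L * (n - 2δ*0 + δ²v) ≤ 1/2 - 2δv + δ²W - (1/2 - δv)²
    have h2 : 1/(4*(n:ℝ)) * ((n:ℝ) + δ^2 * v) ≤ L * ((n:ℝ) + δ^2 * v) :=
      mul_le_mul_of_nonneg_right hLlb (by positivity)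
    have h3 : 1/(4*(n:ℝ)) * ((n:ℝ) + δ^2 * v) = 1/4 + δ^2*v/(4*(n:ℝ)) := by
      field_simp
    have h4 : 0 ≤ δ^2*v/(4*(n:ℝ)) := by positivity
    -- combine : δv + δ²v/(4n) ≤ δ²(W - v²)
    have h5 : δ * v ≤ δ^2 * (W - v^2) := by nlinarith
    nlinarith
  have hv0 : v = 0 := by
    by_contra hne
    have hvpos : 0 < v := lt_of_le_of_ne hvnn (Ne.symm hne)
    set K : ℝ := W - v^2 with hK
    have h1 : v ≤ K := by simpa using key 1 one_pos
    have hKpos : 0 < K := lt_of_lt_of_le hvpos h1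
    have h2 := key (v/(2*K)) (by positivity)
    have h3 : v/(2*K) * K = v/2 := by field_simp
    rw [h3] at h2
    linarith
  intro i
  have hdi : d i ^ 2 = 0 := by
    have h1 : d i ^ 2 ≤ v := hv ▸ Finset.single_le_sum (fun j _ => sq_nonneg (d j)) (mem_univ i)
    exact le_antisymm (hv0 ▸ h1) (sq_nonneg _)
  have hdi0 : d i = 0 := pow_eq_zero_iff two_ne_zero |>.mp hdi
  have : ρ i = 1/(2*(n:ℝ)) := by
    simp only [hd] at hdi0
    linarith
  simpa [hρ] using this
end
end

section
/- In the block model with treatments 0,1,…,n (placebo and n ≥ 2 doses) and t cohorts, for EVERY design ξ (any nonnegative weights summing to 1, no dose-escalation constraints), the smallest eigenvalue of the information matrix for comparing the doses with the placebo satisfies λ_min(N_A(ξ)) ≤ 1/(4n). -/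
noncomputable section

open Matrix Finset

/-- For every design (no dose-escalation constraints), λ_min(N_A(ξ)) ≤ 1/(4n). -/
theorem stmt1 (n t : ℕ) (hn : 2 ≤ n) (ht : 1 ≤ t)
    (ξ : Fin (n+1) → Fin t → ℝ) (hξ : isDesign n t ξ) :
    lambdaMin (NAgen n t ξ) ≤ 1 / (4 * n) := by
  obtain ⟨hpos, hsum⟩ := hξ
  have hn0 : (0:ℝ) < n := by
    have : (0:ℕ) < n := by omega
    exact_mod_cast this
  set A : Matrix (Fin n) (Fin n) ℝ := NAgen n t ξ with hA
  set x : Fin n → ℝ := fun _ => (Real.sqrt n)⁻¹ with hxdef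
  have hsq : (Real.sqrt n)⁻¹ ^ 2 = (n:ℝ)⁻¹ := by
    rw [inv_pow, Real.sq_sqrt hn0.le]
  have hxsum : ∑ i : Fin n, x i ^ 2 = 1 := by
    simp only [hxdef, Finset.sum_const, Finset.card_fin, nsmul_eq_mul, hsq]
    field_simp
  set c : Fin t → ℝ := fun k => if 0 < coh n t ξ k then (coh n t ξ k)⁻¹ else 0 with hc
  set a : Fin t → ℝ := fun k => ∑ i : Fin n, ξ i.succ k with ha
  -- the double sum of the entries of A
  have hS : ∑ i, ∑ j, A i j = (∑ k, a k) - ∑ k, c k * (a k * a k) := by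
    have h1 : ∀ i : Fin n, ∑ j, A i j
        = repl n t ξ i.succ - ∑ k, c k * (ξ i.succ k * a k) := by
      intro i
      rw [hA]
      simp only [NAgen, Finset.sum_sub_distrib]
      congr 1
      · simp
      · rw [Finset.sum_comm]
        refine Finset.sum_congr rfl fun k _ => ?_
        rw [← Finset.mul_sum, ← Finset.mul_sum]
    rw [Finset.sum_congr rfl fun i _ => h1 i, Finset.sum_sub_distrib]
    congr 1
    · rw [show ∑ i : Fin n, repl n t ξ i.succ = ∑ i : Fin n, ∑ k, ξ i.succ k from rfl,
        Finset.sum_comm]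
    · rw [Finset.sum_comm]
      refine Finset.sum_congr rfl fun k _ => ?_
      rw [← Finset.mul_sum]
      congr 1
      rw [← Finset.sum_mul]
  -- cohort sums
  have hcoh : ∀ k, coh n t ξ k = ξ 0 k + a k := by
    intro k
    rw [coh, Fin.sum_univ_succ]
  have hcohsum : ∑ k, coh n t ξ k = 1 := by
    rw [show ∑ k, coh n t ξ k = ∑ k, ∑ i, ξ i k from rfl, Finset.sum_comm]
    exact hsum
  -- per-cohort bound
  have hk : ∀ k, a k - c k * (a k * a k) ≤ coh n t ξ k / 4 := by
    intro k
    have ha0 : 0 ≤ a k := Finset.sum_nonneg fun i _ => hpos _ _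
    have hb0 : 0 ≤ ξ 0 k := hpos _ _
    by_cases h : 0 < coh n t ξ k
    · have hcne : coh n t ξ k ≠ 0 := ne_of_gt h
      simp only [hc, if_pos h]
      have key : a k - (coh n t ξ k)⁻¹ * (a k * a k) = a k * ξ 0 k / coh n t ξ k := by
        rw [eq_div_iff hcne]
        field_simp
        nlinarith [hcoh k]
      rw [key, div_le_div_iff₀ h (by norm_num : (0:ℝ) < 4)]
      nlinarith [sq_nonneg (a k - ξ 0 k), hcoh k]
    · have hs0 : coh n t ξ k = 0 :=
        le_antisymm (not_lt.mp h) (Finset.sum_nonneg fun i _ => hpos _ _)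
      have ha0' : a k ≤ 0 := by
        have := hcoh k
        linarith [hb0, hs0 ▸ this]
      simp only [hc, if_neg h]
      rw [hs0]
      linarith
  have hSle : ∑ i, ∑ j, A i j ≤ 1 / 4 := by
    rw [hS]
    have : (∑ k, a k) - ∑ k, c k * (a k * a k)
        = ∑ k, (a k - c k * (a k * a k)) := by rw [Finset.sum_sub_distrib]
    rw [this]
    calc ∑ k, (a k - c k * (a k * a k)) ≤ ∑ k, coh n t ξ k / 4 :=
          Finset.sum_le_sum fun k _ => hk k
      _ = (∑ k, coh n t ξ k) / 4 := by rw [Finset.sum_div]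
      _ = 1 / 4 := by rw [hcohsum]
  -- the Rayleigh quotient at x
  set Q := ∑ i, ∑ j, x i * A i j * x j with hQ
  have hQval : Q = (n:ℝ)⁻¹ * ∑ i, ∑ j, A i j := by
    rw [hQ, Finset.mul_sum]
    refine Finset.sum_congr rfl fun i _ => ?_
    rw [Finset.mul_sum]
    refine Finset.sum_congr rfl fun j _ => ?_
    simp only [hxdef]
    rw [show (Real.sqrt n)⁻¹ * A i j * (Real.sqrt n)⁻¹
        = (Real.sqrt n)⁻¹ ^ 2 * A i j by ring, hsq]
  have hQle : Q ≤ 1 / (4 * n) := by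
    rw [hQval]
    calc (n:ℝ)⁻¹ * ∑ i, ∑ j, A i j ≤ (n:ℝ)⁻¹ * (1/4) :=
          mul_le_mul_of_nonneg_left hSle (inv_nonneg.mpr hn0.le)
      _ = 1 / (4 * n) := by field_simp
  -- boundedness below of the Rayleigh set
  have hbdd : BddBelow {r : ℝ | ∃ y : Fin n → ℝ,
      ∑ i, y i ^ 2 = 1 ∧ r = ∑ i, ∑ j, y i * A i j * y j} := by
    refine ⟨-(∑ i, ∑ j, |A i j|), ?_⟩
    rintro r ⟨y, hy, rfl⟩
    have hy1 : ∀ i, |y i| ≤ 1 := by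
      intro i
      have h1 : y i ^ 2 ≤ 1 := by
        rw [← hy]
        exact Finset.single_le_sum (fun j _ => sq_nonneg (y j)) (Finset.mem_univ i)
      nlinarith [abs_nonneg (y i), sq_abs (y i)]
    have habs : |∑ i, ∑ j, y i * A i j * y j| ≤ ∑ i, ∑ j, |A i j| := by
      calc |∑ i, ∑ j, y i * A i j * y j| ≤ ∑ i, |∑ j, y i * A i j * y j| :=
            Finset.abs_sum_le_sum_abs _ _
        _ ≤ ∑ i, ∑ j, |y i * A i j * y j| :=
            Finset.sum_le_sum fun i _ => Finset.abs_sum_le_sum_abs _ _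
        _ ≤ ∑ i, ∑ j, |A i j| := by
            refine Finset.sum_le_sum fun i _ => Finset.sum_le_sum fun j _ => ?_
            rw [abs_mul, abs_mul]
            calc |y i| * |A i j| * |y j| ≤ 1 * |A i j| * 1 := by
                  apply mul_le_mul (mul_le_mul (hy1 i) le_rfl (abs_nonneg _) (by norm_num))
                    (hy1 j) (abs_nonneg _)
                  positivity
              _ = |A i j| := by ring
    linarith [neg_abs_le (∑ i, ∑ j, y i * A i j * y j), habs]
  have hmem : Q ∈ {r : ℝ | ∃ y : Fin n → ℝ,
      ∑ i, y i ^ 2 = 1 ∧ r = ∑ i, ∑ j, y i * A i j * y j} := ⟨x, hxsum, rfl⟩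
  calc lambdaMin A ≤ Q := csInf_le hbdd hmem
    _ ≤ 1 / (4 * n) := hQle
end
end

section
/- For every extended dose-escalation design ξ (t = n+1), λ_min(N_A(ξ)) ≤ 1/(4n), and λ_min(N_A(ξ)) = 1/(4n) holds if and only if ξ(0,k) = 1/(2(n+1)) for every cohort k = 1,…,n+1 and r_1(ξ) = r_2(ξ) = … = r_n(ξ) = 1/(2n). Consequently, an extended design is E-optimal for comparing the drug doses with the placebo if and only if it satisfies these linear conditions. -/
noncomputable section

open Matrix Finset

/-- A dose-escalation design: (i) in cohort k ≤ n only treatments 0,…,k are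
allowed (cohort `k : Fin t` has cohort number k+1, treatment `i : Fin (n+1)`
has treatment number i); (ii) each cohort has proportion 1/t. -/
def isEscalation (n t : ℕ) (ξ : Fin (n+1) → Fin t → ℝ) : Prop :=
  isDesign n t ξ ∧
  (∀ (i : Fin (n+1)) (k : Fin t), k.val + 1 ≤ n → k.val + 1 < i.val → ξ i k = 0) ∧
  (∀ k : Fin t, ∑ i, ξ i k = 1 / t)

/-- The information matrix N_A(ξ) = diag(r_1,…,r_n) − t·Z Z^T for comparing
the doses with the placebo. -/
def NA (n t : ℕ) (ξ : Fin (n+1) → Fin t → ℝ) : Matrix (Fin n) (Fin n) ℝ :=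
  fun i j => (if i = j then repl n t ξ i.succ else 0) -
    (t : ℝ) * ∑ k, ξ i.succ k * ξ j.succ k

/-- The Senn design (t = n): in each cohort half the weight on placebo and half
on the highest allowed dose. -/
def senn (n : ℕ) : Fin (n+1) → Fin n → ℝ :=
  fun i k => if i.val = 0 ∨ i.val = k.val + 1 then 1 / (2 * n) else 0

/-- quadratic form -/
def QF {m : ℕ} (A : Matrix (Fin m) (Fin m) ℝ) (x : Fin m → ℝ) : ℝ :=
  ∑ i, ∑ j, x i * A i j * x j

def specSet {m : ℕ} (A : Matrix (Fin m) (Fin m) ℝ) : Set ℝ :=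
  { r : ℝ | ∃ x : Fin m → ℝ, ∑ i, x i ^ 2 = 1 ∧ r = ∑ i, ∑ j, x i * A i j * x j }

lemma lambdaMin_eq {m : ℕ} (A : Matrix (Fin m) (Fin m) ℝ) :
    lambdaMin A = sInf (specSet A) := rfl

lemma triple_comm {a b c : ℕ} (f : Fin a → Fin b → Fin c → ℝ) :
    ∑ i, ∑ j, ∑ k, f i j k = ∑ k, ∑ i, ∑ j, f i j k :=
  (Finset.sum_congr rfl fun _ _ => Finset.sum_comm).trans Finset.sum_comm

lemma Qform (n t : ℕ) (ξ : Fin (n+1) → Fin t → ℝ) (x : Fin n → ℝ) :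
    QF (NA n t ξ) x
      = (∑ i, repl n t ξ i.succ * x i ^ 2)
        - (t:ℝ) * ∑ k, (∑ i, x i * ξ i.succ k) ^ 2 := by
  have key : ∀ i j : Fin n, x i * NA n t ξ i j * x j =
      (if j = i then repl n t ξ i.succ * x i ^ 2 else 0)
        - ∑ k, (t:ℝ) * ((x i * ξ i.succ k) * (x j * ξ j.succ k)) := by
    intro i j
    unfold NA
    rw [mul_sub, sub_mul, Finset.mul_sum, Finset.mul_sum, Finset.sum_mul]
    congr 1
    · rcases eq_or_ne j i with h | h
      · subst h; simp; ring
      · simp [h, Ne.symm h]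
    · exact Finset.sum_congr rfl fun k _ => by ring
  unfold QF
  simp only [key, Finset.sum_sub_distrib]
  congr 1
  · simp [Finset.sum_ite_eq]
  · rw [triple_comm, Finset.mul_sum]
    refine Finset.sum_congr rfl fun k _ => ?_
    rw [sq, Finset.sum_mul_sum, Finset.mul_sum]
    exact Finset.sum_congr rfl fun i _ => by rw [Finset.mul_sum]
lemma QF_mem {m : ℕ} (A : Matrix (Fin m) (Fin m) ℝ) (x : Fin m → ℝ)
    (hx : ∑ i, x i ^ 2 = 1) : QF A x ∈ specSet A := ⟨x, hx, rfl⟩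

lemma specSet_bddBelow {m : ℕ} (A : Matrix (Fin m) (Fin m) ℝ) :
    BddBelow (specSet A) := by
  refine ⟨-∑ i, ∑ j, |A i j|, fun r hr => ?_⟩
  obtain ⟨x, hx, rfl⟩ := hr
  have hxi : ∀ i, |x i| ≤ 1 := by
    intro i
    have h1 : x i ^ 2 ≤ 1 := hx ▸ Finset.single_le_sum
      (f := fun i => x i ^ 2) (fun i _ => sq_nonneg _) (Finset.mem_univ i)
    nlinarith [abs_nonneg (x i), sq_abs (x i)]
  have key : ∀ i j : Fin m, -|A i j| ≤ x i * A i j * x j := by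
    intro i j
    have habs : |x i * A i j * x j| ≤ |A i j| := by
      rw [abs_mul, abs_mul]
      calc |x i| * |A i j| * |x j| ≤ 1 * |A i j| * 1 := by
            gcongr
            · exact hxi i
            · exact hxi j
        _ = |A i j| := by ring
    linarith [neg_abs_le (x i * A i j * x j), neg_le_neg habs]
  calc -∑ i, ∑ j, |A i j| = ∑ i, ∑ j, -|A i j| := by
        rw [← Finset.sum_neg_distrib]
        exact Finset.sum_congr rfl fun i _ => (Finset.sum_neg_distrib _).symm
    _ ≤ ∑ i, ∑ j, x i * A i j * x j :=
        Finset.sum_le_sum fun i _ => Finset.sum_le_sum fun j _ => key i j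

lemma lambdaMin_le_QF {m : ℕ} (A : Matrix (Fin m) (Fin m) ℝ) (x : Fin m → ℝ)
    (hx : ∑ i, x i ^ 2 = 1) : lambdaMin A ≤ QF A x :=
  csInf_le (specSet_bddBelow A) (QF_mem A x hx)

lemma lambdaMin_smul {m : ℕ} (A : Matrix (Fin m) (Fin m) ℝ) (v : Fin m → ℝ) :
    lambdaMin A * ∑ i, v i ^ 2 ≤ QF A v := by
  rcases eq_or_lt_of_le (Finset.sum_nonneg (fun i (_ : i ∈ Finset.univ) => sq_nonneg (v i)))
    with h | h
  · have hv : ∀ i, v i = 0 := by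
      intro i
      have := (Finset.sum_eq_zero_iff_of_nonneg
        (fun i (_ : i ∈ Finset.univ) => sq_nonneg (v i))).mp h.symm i (Finset.mem_univ i)
      exact pow_eq_zero_iff (n := 2) (by norm_num) |>.mp this
    have hQ : QF A v = 0 := by
      unfold QF; simp [hv]
    rw [hQ, ← h, mul_zero]
  · set c := Real.sqrt (∑ i, v i ^ 2) with hc
    have hc0 : 0 < c := Real.sqrt_pos.mpr h
    have hcsq : c ^ 2 = ∑ i, v i ^ 2 := Real.sq_sqrt h.le
    have hx : ∑ i, (v i / c) ^ 2 = 1 := by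
      simp only [div_pow]
      rw [← Finset.sum_div, ← hcsq, div_self (by positivity)]
    have hQ : QF A (fun i => v i / c) = QF A v / c ^ 2 := by
      unfold QF
      rw [Finset.sum_div]
      refine Finset.sum_congr rfl fun i _ => ?_
      rw [Finset.sum_div]
      refine Finset.sum_congr rfl fun j _ => ?_
      show v i / c * A i j * (v j / c) = v i * A i j * v j / c ^ 2
      field_simp
    have := lambdaMin_le_QF A (fun i => v i / c) hx
    rw [hQ, le_div_iff₀ (by positivity)] at this
    calc lambdaMin A * ∑ i, v i ^ 2 = lambdaMin A * c ^ 2 := by rw [hcsq]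
      _ ≤ QF A v := this
lemma QF_one (n : ℕ) (ξ : Fin (n+1) → Fin (n+1) → ℝ) :
    QF (NA n (n+1) ξ) (fun _ => 1)
      = ∑ k, ((∑ i : Fin n, ξ i.succ k)
          - ((n:ℝ)+1) * (∑ i : Fin n, ξ i.succ k)^2) := by
  rw [Qform]
  push_cast
  rw [Finset.sum_sub_distrib, Finset.mul_sum]
  congr 1
  · have : ∀ i : Fin n, repl n (n+1) ξ i.succ * (1:ℝ)^2 = ∑ k, ξ i.succ k := by
      intro i; rw [one_pow, mul_one]; rfl
    simp only [this]
    rw [Finset.sum_comm]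
  · refine Finset.sum_congr rfl fun k _ => ?_
    simp

lemma QF_smul {m : ℕ} (A : Matrix (Fin m) (Fin m) ℝ) (c : ℝ) (x : Fin m → ℝ) :
    QF A (fun i => c * x i) = c^2 * QF A x := by
  unfold QF
  rw [Finset.mul_sum]
  refine Finset.sum_congr rfl fun i _ => ?_
  rw [Finset.mul_sum]
  exact Finset.sum_congr rfl fun j _ => by ring
lemma pointwise_bound (t s : ℝ) (ht : 0 < t) : s - t * s^2 ≤ 1/(4*t) := by
  have h := sq_nonneg (s - 1/(2*t))
  have h2 : t * (s - 1/(2*t))^2 = t*s^2 - s + 1/(4*t) := by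
    field_simp
    ring
  nlinarith

lemma sum_s_bound (n : ℕ) (hn : 0 < n) (ξ : Fin (n+1) → Fin (n+1) → ℝ) :
    ∑ k, ((∑ i : Fin n, ξ i.succ k)
        - ((n:ℝ)+1) * (∑ i : Fin n, ξ i.succ k)^2) ≤ 1/4 := by
  have hp : (0:ℝ) < (n:ℝ)+1 := by positivity
  calc ∑ k, ((∑ i : Fin n, ξ i.succ k) - ((n:ℝ)+1) * (∑ i : Fin n, ξ i.succ k)^2)
      ≤ ∑ k : Fin (n+1), 1/(4*((n:ℝ)+1)) :=
        Finset.sum_le_sum fun k _ => pointwise_bound _ _ hp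
    _ = 1/4 := by
        rw [Finset.sum_const, Finset.card_univ]
        simp only [Fintype.card_fin, nsmul_eq_mul]
        push_cast
        field_simp

lemma upper_bound (n : ℕ) (hn : 0 < n) (ξ : Fin (n+1) → Fin (n+1) → ℝ) :
    lambdaMin (NA n (n+1) ξ) ≤ 1/(4*(n:ℝ)) := by
  have hnr : (0:ℝ) < n := by exact_mod_cast hn
  set c := (Real.sqrt n)⁻¹ with hc
  have hcsq : c^2 = ((n:ℝ))⁻¹ := by
    rw [hc, ← Real.sqrt_inv, Real.sq_sqrt (by positivity)]
  have hx : ∑ i : Fin n, (fun _ => c) i ^ 2 = 1 := by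
    rw [Finset.sum_const, Finset.card_univ]
    simp only [Fintype.card_fin, nsmul_eq_mul, hcsq]
    field_simp
  have h1 := lambdaMin_le_QF (NA n (n+1) ξ) (fun _ => c) hx
  have h2 : QF (NA n (n+1) ξ) (fun _ => c) = c^2 * QF (NA n (n+1) ξ) (fun _ => 1) := by
    rw [← QF_smul]
    simp
  rw [h2, QF_one] at h1
  have h3 := sum_s_bound n hn ξ
  have hcpos : 0 < c^2 := by rw [hcsq]; positivity
  calc lambdaMin (NA n (n+1) ξ) ≤ c^2 * ∑ k, ((∑ i : Fin n, ξ i.succ k)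
          - ((n:ℝ)+1) * (∑ i : Fin n, ξ i.succ k)^2) := h1
    _ ≤ c^2 * (1/4) := by nlinarith
    _ = 1/(4*(n:ℝ)) := by rw [hcsq]; field_simp
lemma specSet_nonempty {m : ℕ} (hm : 0 < m) (A : Matrix (Fin m) (Fin m) ℝ) :
    (specSet A).Nonempty := by
  set j0 : Fin m := ⟨0, hm⟩
  refine ⟨QF A (fun i => if i = j0 then 1 else 0), QF_mem A _ ?_⟩
  have h : ∀ i : Fin m, (if i = j0 then (1:ℝ) else 0)^2 = if i = j0 then 1 else 0 :=
    fun i => by split_ifs <;> norm_num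
  simp [h]

lemma lower_bound (n : ℕ) (hn : 0 < n) (ξ : Fin (n+1) → Fin (n+1) → ℝ)
    (hpos : ∀ i k, 0 ≤ ξ i k)
    (hs : ∀ k : Fin (n+1), ∑ i : Fin n, ξ i.succ k = 1/(2*((n:ℝ)+1)))
    (hr : ∀ i : Fin n, repl n (n+1) ξ i.succ = 1/(2*(n:ℝ))) :
    1/(4*(n:ℝ)) ≤ lambdaMin (NA n (n+1) ξ) := by
  have hnr : (0:ℝ) < n := by exact_mod_cast hn
  refine le_csInf (specSet_nonempty hn _) ?_
  rintro r ⟨x, hx, rfl⟩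
  have hQ : (∑ i, ∑ j, x i * NA n (n+1) ξ i j * x j) = QF (NA n (n+1) ξ) x := rfl
  rw [hQ, Qform]
  -- first sum
  have h1 : ∑ i, repl n (n+1) ξ i.succ * x i ^ 2 = 1/(2*(n:ℝ)) := by
    calc ∑ i, repl n (n+1) ξ i.succ * x i ^ 2 = ∑ i, 1/(2*(n:ℝ)) * x i ^2 :=
          Finset.sum_congr rfl fun i _ => by rw [hr i]
      _ = 1/(2*(n:ℝ)) * ∑ i, x i ^2 := by rw [Finset.mul_sum]
      _ = 1/(2*(n:ℝ)) := by rw [hx, mul_one]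
  -- Cauchy–Schwarz per column
  have cs : ∀ k, (∑ i, x i * ξ i.succ k)^2 ≤
      (1/(2*((n:ℝ)+1))) * (∑ i, x i^2 * ξ i.succ k) := by
    intro k
    have key := Finset.sum_mul_sq_le_sq_mul_sq Finset.univ
      (fun i : Fin n => Real.sqrt (ξ i.succ k))
      (fun i : Fin n => x i * Real.sqrt (ξ i.succ k))
    have e1 : ∀ i : Fin n, Real.sqrt (ξ i.succ k) * (x i * Real.sqrt (ξ i.succ k))
        = x i * ξ i.succ k := by
      intro i
      rw [show Real.sqrt (ξ i.succ k) * (x i * Real.sqrt (ξ i.succ k))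
          = x i * (Real.sqrt (ξ i.succ k) * Real.sqrt (ξ i.succ k)) by ring,
        Real.mul_self_sqrt (hpos _ _)]
    have e2 : ∀ i : Fin n, (Real.sqrt (ξ i.succ k))^2 = ξ i.succ k :=
      fun i => Real.sq_sqrt (hpos _ _)
    have e3 : ∀ i : Fin n, (x i * Real.sqrt (ξ i.succ k))^2 = x i ^2 * ξ i.succ k := by
      intro i; rw [mul_pow, e2]
    simp only [e1, e2, e3] at key
    calc (∑ i : Fin n, x i * ξ i.succ k)^2
        ≤ (∑ i : Fin n, ξ i.succ k) * (∑ i : Fin n, x i^2 * ξ i.succ k) := key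
      _ = (1/(2*((n:ℝ)+1))) * (∑ i : Fin n, x i^2 * ξ i.succ k) := by rw [hs k]
  have h2 : ∑ k, (∑ i, x i * ξ i.succ k)^2 ≤ 1/(4*(n:ℝ)*((n:ℝ)+1)) := by
    calc ∑ k, (∑ i, x i * ξ i.succ k)^2
        ≤ ∑ k, (1/(2*((n:ℝ)+1))) * (∑ i, x i^2 * ξ i.succ k) :=
          Finset.sum_le_sum fun k _ => cs k
      _ = (1/(2*((n:ℝ)+1))) * ∑ k, ∑ i, x i^2 * ξ i.succ k := by rw [Finset.mul_sum]
      _ = (1/(2*((n:ℝ)+1))) * ∑ i, x i^2 * repl n (n+1) ξ i.succ := by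
          rw [Finset.sum_comm]
          congr 1
          exact Finset.sum_congr rfl fun i _ => (Finset.mul_sum _ _ _).symm
      _ = (1/(2*((n:ℝ)+1))) * ∑ i, x i^2 * (1/(2*(n:ℝ))) := by
          congr 1; exact Finset.sum_congr rfl fun i _ => by rw [hr i]
      _ = 1/(4*(n:ℝ)*((n:ℝ)+1)) := by
          rw [← Finset.sum_mul, hx]
          field_simp
          ring
  have hcast : ((n+1 : ℕ) : ℝ) = (n:ℝ)+1 := by push_cast; ring
  rw [h1, hcast]
  have hmul : ((n:ℝ)+1) * (1/(4*(n:ℝ)*((n:ℝ)+1))) = 1/(4*(n:ℝ)) := by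
    field_simp
  have h3 := mul_le_mul_of_nonneg_left h2 (by positivity : (0:ℝ) ≤ (n:ℝ)+1)
  have h4 : 1/(2*(n:ℝ)) = 2 * (1/(4*(n:ℝ))) := by field_simp; ring
  linarith
lemma eq_col (n : ℕ) (hn : 0 < n) (ξ : Fin (n+1) → Fin (n+1) → ℝ)
    (hl : lambdaMin (NA n (n+1) ξ) = 1/(4*(n:ℝ))) :
    ∀ k : Fin (n+1), ∑ i : Fin n, ξ i.succ k = 1/(2*((n:ℝ)+1)) := by
  have hnr : (0:ℝ) < n := by exact_mod_cast hn
  have h := lambdaMin_smul (NA n (n+1) ξ) (fun _ => 1)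
  rw [QF_one, hl] at h
  have hones : ∑ i : Fin n, ((fun _ => (1:ℝ)) i)^2 = (n:ℝ) := by
    simp
  rw [hones] at h
  have hquarter : 1/(4*(n:ℝ)) * (n:ℝ) = 1/4 := by field_simp
  rw [hquarter] at h
  -- each term at most 1/(4(n+1)), total at least 1/4 = (n+1)/(4(n+1))
  set g : Fin (n+1) → ℝ :=
    fun k => 1/(4*((n:ℝ)+1)) - ((∑ i : Fin n, ξ i.succ k)
      - ((n:ℝ)+1) * (∑ i : Fin n, ξ i.succ k)^2) with hg
  have hgnonneg : ∀ k ∈ Finset.univ, 0 ≤ g k := by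
    intro k _
    have := pointwise_bound ((n:ℝ)+1) (∑ i : Fin n, ξ i.succ k) (by positivity)
    simp only [hg]
    linarith
  have hgsum : ∑ k, g k = 0 := by
    have h1 : ∑ k, g k = (1:ℝ)/4 - ∑ k, ((∑ i : Fin n, ξ i.succ k)
        - ((n:ℝ)+1) * (∑ i : Fin n, ξ i.succ k)^2) := by
      rw [Finset.sum_sub_distrib, Finset.sum_const, Finset.card_univ]
      simp only [Fintype.card_fin, nsmul_eq_mul]
      push_cast
      congr 1
      field_simp
    have h2 : ∑ k, g k ≤ 0 := by rw [h1]; linarith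
    exact le_antisymm h2 (Finset.sum_nonneg hgnonneg)
  have hzero := (Finset.sum_eq_zero_iff_of_nonneg hgnonneg).mp hgsum
  intro k
  have hk := hzero k (Finset.mem_univ k)
  simp only [hg] at hk
  set s := ∑ i : Fin n, ξ i.succ k
  have h5 : s - ((n:ℝ)+1)*s^2 = 1/(4*((n:ℝ)+1)) := by linarith
  have h6 : ((n:ℝ)+1) * (s - ((n:ℝ)+1)*s^2) = 1/4 := by
    rw [h5]; field_simp
  have hsq : (((n:ℝ)+1)*s - 1/2)^2 = 0 := by linear_combination (-1 : ℝ) * h6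
  have hlin : ((n:ℝ)+1)*s - 1/2 = 0 := by
    exact pow_eq_zero_iff (by norm_num) |>.mp hsq
  have hp : ((n:ℝ)+1) ≠ 0 := by positivity
  field_simp
  linarith
lemma eq_repl (n : ℕ) (hn : 0 < n) (ξ : Fin (n+1) → Fin (n+1) → ℝ)
    (hs : ∀ k : Fin (n+1), ∑ i : Fin n, ξ i.succ k = 1/(2*((n:ℝ)+1)))
    (hl : lambdaMin (NA n (n+1) ξ) = 1/(4*(n:ℝ))) :
    ∀ j : Fin n, repl n (n+1) ξ j.succ = 1/(2*(n:ℝ)) := by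
  have hnr : (0:ℝ) < n := by exact_mod_cast hn
  have hnp : (0:ℝ) < (n:ℝ)+1 := by positivity
  intro j
  set r := repl n (n+1) ξ j.succ with hr
  set u := ((n:ℝ)+1) * ∑ k, (ξ j.succ k)^2 with hu
  have hsumrepl : ∑ i : Fin n, repl n (n+1) ξ i.succ = 1/2 := by
    have h1 : ∑ i : Fin n, repl n (n+1) ξ i.succ = ∑ k, ∑ i : Fin n, ξ i.succ k := by
      unfold repl
      exact Finset.sum_comm
    rw [h1]
    calc ∑ k, ∑ i : Fin n, ξ i.succ k = ∑ k : Fin (n+1), 1/(2*((n:ℝ)+1)) :=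
          Finset.sum_congr rfl fun k _ => hs k
      _ = 1/2 := by
        rw [Finset.sum_const, Finset.card_univ]
        simp only [Fintype.card_fin, nsmul_eq_mul]
        push_cast
        field_simp
  have hval : ∀ ε : ℝ, QF (NA n (n+1) ξ) (fun i => 1 + if i = j then ε else 0)
      = 1/4 + ε * r + ε^2 * (r - u) := by
    intro ε
    rw [Qform]
    have hA : ∑ i, repl n (n+1) ξ i.succ * (1 + if i = j then ε else 0)^2
        = 1/2 + (2*ε + ε^2)*r := by
      have e : ∀ i : Fin n, repl n (n+1) ξ i.succ * (1 + if i = j then ε else 0)^2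
          = repl n (n+1) ξ i.succ
            + (if i = j then (2*ε+ε^2) * repl n (n+1) ξ i.succ else 0) := by
        intro i; split_ifs with h
        · subst h; ring
        · ring
      rw [Finset.sum_congr rfl (fun i _ => e i), Finset.sum_add_distrib, hsumrepl,
        Finset.sum_ite_eq' Finset.univ j]
      simp only [Finset.mem_univ, if_true]
      rfl
    have hB : ∀ k, ∑ i : Fin n, (1 + if i = j then ε else 0) * ξ i.succ k
        = 1/(2*((n:ℝ)+1)) + ε * ξ j.succ k := by
      intro k
      have e : ∀ i : Fin n, (1 + if i = j then ε else 0) * ξ i.succ k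
          = ξ i.succ k + (if i = j then ε * ξ i.succ k else 0) := by
        intro i; split_ifs with h
        · subst h; ring
        · ring
      rw [Finset.sum_congr rfl (fun i _ => e i), Finset.sum_add_distrib, hs k,
        Finset.sum_ite_eq' Finset.univ j]
      simp only [Finset.mem_univ, if_true]
    have hC : ∑ k : Fin (n+1), ((1/(2*((n:ℝ)+1)) + ε * ξ j.succ k))^2
        = 1/(4*((n:ℝ)+1)) + ε/((n:ℝ)+1) * r + ε^2 * ∑ k, (ξ j.succ k)^2 := by
      have e : ∀ k : Fin (n+1), ((1/(2*((n:ℝ)+1)) + ε * ξ j.succ k))^2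
          = (1/(2*((n:ℝ)+1)))^2 + (ε/((n:ℝ)+1)) * ξ j.succ k + ε^2 * (ξ j.succ k)^2 := by
        intro k
        field_simp
        ring
      rw [Finset.sum_congr rfl (fun k _ => e k), Finset.sum_add_distrib,
        Finset.sum_add_distrib, Finset.sum_const, Finset.card_univ, ← Finset.mul_sum,
        ← Finset.mul_sum]
      have hrk : ∑ k, ξ j.succ k = r := rfl
      rw [hrk]
      simp only [Fintype.card_fin, nsmul_eq_mul]
      push_cast
      congr 1
      congr 1
      field_simp
      ring
    have hcast : ((n+1 : ℕ) : ℝ) = (n:ℝ)+1 := by push_cast; ring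
    rw [hA, hcast]
    rw [Finset.sum_congr rfl (fun k (_ : k ∈ Finset.univ) => by rw [hB k])]
    rw [hC, hu]
    field_simp
    ring
  have hskey : ∀ ε : ℝ, 0 ≤ ε * (r - 1/(2*(n:ℝ))) + ε^2 * (r - u - 1/(4*(n:ℝ))) := by
    intro ε
    have h := lambdaMin_smul (NA n (n+1) ξ) (fun i => 1 + if i = j then ε else 0)
    rw [hval ε, hl] at h
    have hsum : ∑ i : Fin n, ((fun i => 1 + if i = j then ε else 0) i)^2
        = (n:ℝ) + (2*ε + ε^2) := by
      have e : ∀ i : Fin n, ((1:ℝ) + if i = j then ε else 0)^2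
          = 1 + (if i = j then 2*ε + ε^2 else 0) := by
        intro i; split_ifs <;> ring
      simp only [e]
      rw [Finset.sum_add_distrib, Finset.sum_const, Finset.card_univ,
        Finset.sum_ite_eq' Finset.univ j]
      simp only [Fintype.card_fin, nsmul_eq_mul, mul_one, Finset.mem_univ, if_true]
    rw [hsum] at h
    have expand : 1/(4*(n:ℝ)) * ((n:ℝ) + (2*ε + ε^2))
        = 1/4 + ε * (1/(2*(n:ℝ))) + ε^2 * (1/(4*(n:ℝ))) := by
      field_simp
      ring
    rw [expand] at h
    nlinarith [h]
  -- conclude r = 1/(2n)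
  set a := r - 1/(2*(n:ℝ)) with haa
  set d := r - u - 1/(4*(n:ℝ)) with hdd
  have ha : a = 0 := by
    by_contra hane
    set w := |d| + 1 with hw
    have hw0 : 0 < w := by positivity
    have h := hskey (-a/w)
    have hexp : (-a/w) * a + (-a/w)^2 * d = (a^2 * (d - w))/w^2 := by
      field_simp
      ring
    rw [hexp] at h
    have hdw : d - w < 0 := by
      have := le_abs_self d
      rw [hw]
      linarith
    have ha2 : 0 < a^2 := lt_of_le_of_ne (sq_nonneg a) (Ne.symm (pow_ne_zero 2 hane))
    have hneg : a^2 * (d - w) < 0 := mul_neg_of_pos_of_neg ha2 hdw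
    have : (a^2 * (d - w))/w^2 < 0 := div_neg_of_neg_of_pos hneg (by positivity)
    linarith
  have : r = 1/(2*(n:ℝ)) := by rw [haa] at ha; linarith
  exact this
def xistar (n : ℕ) : Fin (n+1) → Fin (n+1) → ℝ :=
  fun i k => if i.val = 0 then 1/(2*((n:ℝ)+1))
    else if k.val = n then 1/(2*(n:ℝ)*((n:ℝ)+1))
    else if i.val = k.val + 1 then 1/(2*((n:ℝ)+1)) else 0

lemma xistar_nonneg (n : ℕ) : ∀ i k, 0 ≤ xistar n i k := by
  intro i k
  unfold xistar
  split_ifs <;> positivity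

lemma xistar_zero_row (n : ℕ) : ∀ k, xistar n 0 k = 1/(2*((n:ℝ)+1)) := by
  intro k
  unfold xistar
  simp

lemma xistar_dose_col (n : ℕ) (hn : 0 < n) (k : Fin (n+1)) :
    ∑ i : Fin n, xistar n i.succ k = 1/(2*((n:ℝ)+1)) := by
  have hnr : (0:ℝ) < n := by exact_mod_cast hn
  unfold xistar
  rcases eq_or_ne k.val n with hk | hk
  · have e : ∀ i : Fin n, (if (i.succ).val = 0 then 1/(2*((n:ℝ)+1))
        else if k.val = n then 1/(2*(n:ℝ)*((n:ℝ)+1))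
        else if (i.succ).val = k.val + 1 then 1/(2*((n:ℝ)+1)) else 0)
        = 1/(2*(n:ℝ)*((n:ℝ)+1)) := by
      intro i
      rw [if_neg (by simp [Fin.val_succ]), if_pos hk]
    rw [Finset.sum_congr rfl fun i _ => e i, Finset.sum_const, Finset.card_univ]
    simp only [Fintype.card_fin, nsmul_eq_mul]
    field_simp
  · have hkn : k.val < n := lt_of_le_of_ne (Nat.lt_succ_iff.mp k.isLt) hk
    have e : ∀ i : Fin n, (if (i.succ).val = 0 then 1/(2*((n:ℝ)+1))
        else if k.val = n then 1/(2*(n:ℝ)*((n:ℝ)+1))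
        else if (i.succ).val = k.val + 1 then 1/(2*((n:ℝ)+1)) else 0)
        = if i = (⟨k.val, hkn⟩ : Fin n) then 1/(2*((n:ℝ)+1)) else 0 := by
      intro i
      rw [if_neg (by simp [Fin.val_succ]), if_neg hk]
      have : (i.succ).val = k.val + 1 ↔ i = (⟨k.val, hkn⟩ : Fin n) := by
        rw [Fin.ext_iff]
        simp only [Fin.val_succ, Fin.val_mk]
        omega
      split_ifs with h1 h2 h2
      · rfl
      · exact absurd (this.mp h1) h2
      · exact absurd (this.mpr h2) h1
      · rfl
    rw [Finset.sum_congr rfl fun i _ => e i, Finset.sum_ite_eq' Finset.univ]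
    simp

lemma xistar_col (n : ℕ) (hn : 0 < n) (k : Fin (n+1)) :
    ∑ i, xistar n i k = 1/((n:ℝ)+1) := by
  rw [Fin.sum_univ_succ, xistar_zero_row, xistar_dose_col n hn k]
  have hnr : (0:ℝ) < n := by exact_mod_cast hn
  have hne : ((n:ℝ)+1) ≠ 0 := by positivity
  rw [← add_div, div_eq_div_iff (by positivity) hne]
  ring

lemma xistar_repl (n : ℕ) (hn : 0 < n) (j : Fin n) :
    repl n (n+1) (xistar n) j.succ = 1/(2*(n:ℝ)) := by
  have hnr : (0:ℝ) < n := by exact_mod_cast hn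
  unfold repl xistar
  have e : ∀ k : Fin (n+1), (if (j.succ).val = 0 then 1/(2*((n:ℝ)+1))
      else if k.val = n then 1/(2*(n:ℝ)*((n:ℝ)+1))
      else if (j.succ).val = k.val + 1 then 1/(2*((n:ℝ)+1)) else 0)
      = (if k = Fin.last n then 1/(2*(n:ℝ)*((n:ℝ)+1)) else 0)
        + (if k = (⟨j.val, lt_trans j.isLt (Nat.lt_succ_self n)⟩ : Fin (n+1))
            then 1/(2*((n:ℝ)+1)) else 0) := by
    intro k
    set k0 : Fin (n+1) := ⟨j.val, lt_trans j.isLt (Nat.lt_succ_self n)⟩ with hk0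
    rw [if_neg (by simp [Fin.val_succ])]
    by_cases ha : k = Fin.last n
    · have hav : k.val = n := by rw [ha]; rfl
      have hc : ¬(k = k0) := by
        rw [Fin.ext_iff]
        simp only [hk0, Fin.val_mk, hav]
        omega
      rw [if_pos hav, if_pos ha, if_neg hc]
      ring
    · have hav : ¬(k.val = n) := fun h => ha (Fin.ext h)
      rw [if_neg hav, if_neg ha]
      by_cases hb : k = k0
      · have hv : (j.succ).val = k.val + 1 := by
          rw [hb]
          simp [Fin.val_succ, hk0]
        rw [if_pos hv, if_pos hb]
        ring
      · have hv : ¬((j.succ).val = k.val + 1) := by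
          intro h
          apply hb
          rw [Fin.ext_iff]
          simp only [Fin.val_succ, hk0, Fin.val_mk] at h ⊢
          omega
        rw [if_neg hv, if_neg hb]
        ring
  rw [Finset.sum_congr rfl fun k _ => e k, Finset.sum_add_distrib,
    Finset.sum_ite_eq' Finset.univ, Finset.sum_ite_eq' Finset.univ]
  simp only [Finset.mem_univ, if_true]
  field_simp
  ring

lemma xistar_escalation (n : ℕ) (hn : 0 < n) : isEscalation n (n+1) (xistar n) := by
  have hnr : (0:ℝ) < n := by exact_mod_cast hn
  have hcast : ((n+1 : ℕ) : ℝ) = (n:ℝ)+1 := by push_cast; ring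
  refine ⟨⟨xistar_nonneg n, ?_⟩, ?_, ?_⟩
  · rw [Finset.sum_comm]
    have : ∀ k : Fin (n+1), ∑ i, xistar n i k = 1/((n:ℝ)+1) := xistar_col n hn
    rw [Finset.sum_congr rfl fun k _ => this k, Finset.sum_const, Finset.card_univ]
    simp only [Fintype.card_fin, nsmul_eq_mul]
    push_cast
    field_simp
  · intro i k h1 h2
    unfold xistar
    rw [if_neg (by omega), if_neg (by omega), if_neg (by omega)]
  · intro k
    rw [xistar_col n hn k, hcast]

/-- Theorem 2 (E-optimality, extended designs, t = n+1): every extended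
dose-escalation design has λ_min(N_A(ξ)) ≤ 1/(4n), with equality iff
ξ(0,k) = 1/(2(n+1)) for all cohorts k and r_1(ξ) = … = r_n(ξ) = 1/(2n);
consequently, an extended design is E-optimal iff these conditions hold. -/
theorem stmt3 (n : ℕ) (hn : 2 ≤ n) :
    (∀ ξ : Fin (n+1) → Fin (n+1) → ℝ, isEscalation n (n+1) ξ →
      lambdaMin (NA n (n+1) ξ) ≤ 1 / (4 * n) ∧
      (lambdaMin (NA n (n+1) ξ) = 1 / (4 * n) ↔
        ((∀ k : Fin (n+1), ξ 0 k = 1 / (2 * (n + 1))) ∧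
         (∀ i : Fin n, repl n (n+1) ξ i.succ = 1 / (2 * n))))) ∧
    (∀ ξ : Fin (n+1) → Fin (n+1) → ℝ, isEscalation n (n+1) ξ →
      ((∀ ξ' : Fin (n+1) → Fin (n+1) → ℝ, isEscalation n (n+1) ξ' →
          lambdaMin (NA n (n+1) ξ') ≤ lambdaMin (NA n (n+1) ξ)) ↔
        ((∀ k : Fin (n+1), ξ 0 k = 1 / (2 * (n + 1))) ∧
         (∀ i : Fin n, repl n (n+1) ξ i.succ = 1 / (2 * n))))) := by
  have hn0 : 0 < n := by omega
  have hnr : (0:ℝ) < n := by exact_mod_cast hn0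
  have key : ∀ ξ : Fin (n+1) → Fin (n+1) → ℝ, isEscalation n (n+1) ξ →
      lambdaMin (NA n (n+1) ξ) ≤ 1 / (4 * n) ∧
      (lambdaMin (NA n (n+1) ξ) = 1 / (4 * n) ↔
        ((∀ k : Fin (n+1), ξ 0 k = 1 / (2 * (n + 1))) ∧
         (∀ i : Fin n, repl n (n+1) ξ i.succ = 1 / (2 * n)))) := by
    intro ξ hesc
    obtain ⟨⟨hpos, _⟩, _, hcol⟩ := hesc
    have hcol' : ∀ k : Fin (n+1), ξ 0 k + ∑ i : Fin n, ξ i.succ k = 1/((n:ℝ)+1) := by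
      intro k
      have h := hcol k
      rw [Fin.sum_univ_succ] at h
      push_cast at h
      exact h
    have halfeq : (1:ℝ)/((n:ℝ)+1) = 2 * (1/(2*((n:ℝ)+1))) := by
      field_simp
    refine ⟨upper_bound n hn0 ξ, ?_, ?_⟩
    · intro hl
      have hs := eq_col n hn0 ξ hl
      refine ⟨fun k => ?_, eq_repl n hn0 ξ hs hl⟩
      have h := hcol' k
      rw [hs k] at h
      linarith
    · rintro ⟨h0, hr⟩
      have hs : ∀ k : Fin (n+1), ∑ i : Fin n, ξ i.succ k = 1/(2*((n:ℝ)+1)) := by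
        intro k
        have h := hcol' k
        rw [h0 k] at h
        linarith
      exact le_antisymm (upper_bound n hn0 ξ) (lower_bound n hn0 ξ hpos hs hr)
  refine ⟨key, ?_⟩
  intro ξ hesc
  have hstar_eq : lambdaMin (NA n (n+1) (xistar n)) = 1/(4*(n:ℝ)) :=
    le_antisymm (upper_bound n hn0 (xistar n))
      (lower_bound n hn0 (xistar n) (xistar_nonneg n) (xistar_dose_col n hn0)
        (xistar_repl n hn0))
  constructor
  · intro hopt
    have h1 := hopt (xistar n) (xistar_escalation n hn0)
    rw [hstar_eq] at h1
    have h2 := (key ξ hesc).1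
    exact ((key ξ hesc).2).mp (le_antisymm h2 h1)
  · intro hcond ξ' hesc'
    have heq : lambdaMin (NA n (n+1) ξ) = 1/(4*(n:ℝ)) := ((key ξ hesc).2).mpr hcond
    rw [heq]
    exact (key ξ' hesc').1
end
end

section
/- The uniformly extended Senn design is an extended dose-escalation design (it satisfies constraints (i) and (ii) with t = n+1) and its information matrix satisfies λ_min(N_A(ξ)) = 1/(4n); hence it is E-optimal among extended dose-escalation designs for comparing the drug doses with the placebo. -/
noncomputable section

open Matrix Finset

/-- The uniformly extended Senn design (t = n+1): the Senn design in the first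
n cohorts; in cohort n+1 half the weight on the placebo and the other half
uniformly on the n doses. -/
def unifSenn (n : ℕ) : Fin (n+1) → Fin (n+1) → ℝ :=
  fun i k =>
    if i.val = 0 then 1 / (2 * (n + 1))
    else if i.val = k.val + 1 then 1 / (2 * (n + 1))
    else if k.val = n then 1 / (2 * n * (n + 1))
    else 0

/- ## basic lemmas on unifSenn -/

lemma unifSenn_zero (n : ℕ) (k : Fin (n+1)) : unifSenn n 0 k = 1/(2*((n:ℝ)+1)) := by
  simp [unifSenn]

lemma unifSenn_succ (n : ℕ) (i : Fin n) (k : Fin (n+1)) :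
    unifSenn n i.succ k = (if k = i.castSucc then 1/(2*((n:ℝ)+1)) else 0)
      + (if k = Fin.last n then 1/(2*(n:ℝ)*((n:ℝ)+1)) else 0) := by
  have hi : i.val ≠ n := Nat.ne_of_lt i.isLt
  induction k using Fin.lastCases with
  | last =>
      have h1 : (i.castSucc : Fin (n+1)) ≠ Fin.last n := Fin.ne_of_lt (Fin.castSucc_lt_last i)
      simp [unifSenn, Fin.val_succ, Fin.val_last, h1.symm, hi]
  | cast m =>
      have h2 : (m.castSucc : Fin (n+1)) ≠ Fin.last n := Fin.ne_of_lt (Fin.castSucc_lt_last m)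
      have h3 : m.val ≠ n := Nat.ne_of_lt m.isLt
      by_cases h : m = i
      · subst h; simp [unifSenn, Fin.val_succ, h2, h3]
      · have h4 : (m.castSucc : Fin (n+1)) ≠ i.castSucc := by
          simpa [Fin.ext_iff] using fun hh => h (Fin.ext hh)
        have h5 : i.val + 1 ≠ m.val + 1 := by
          simp [Fin.ext_iff] at h4; omega
        simp [unifSenn, Fin.val_succ, h2, h3, h4.symm, h5, h]
        exact fun hh => absurd (Fin.ext (by exact_mod_cast hh)).symm h

lemma repl_unifSenn_succ (n : ℕ) (i : Fin n) :
    repl n (n+1) (unifSenn n) i.succ = 1/(2*((n:ℝ)+1)) + 1/(2*(n:ℝ)*((n:ℝ)+1)) := by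
  unfold repl
  simp_rw [unifSenn_succ, Finset.sum_add_distrib, Finset.sum_ite_eq', Finset.mem_univ, if_true]

lemma dot_unifSenn_cast (n : ℕ) (x : Fin n → ℝ) (m : Fin n) :
    ∑ i, x i * unifSenn n i.succ (m.castSucc) = x m * (1/(2*((n:ℝ)+1))) := by
  simp_rw [unifSenn_succ]
  have h2 : (m.castSucc : Fin (n+1)) ≠ Fin.last n := Fin.ne_of_lt (Fin.castSucc_lt_last m)
  simp only [h2, if_false, add_zero, Fin.castSucc_inj, mul_ite, mul_zero]
  rw [Finset.sum_ite_eq Finset.univ m (fun i => x i * (1/(2*((n:ℝ)+1))))]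
  simp

lemma dot_unifSenn_last (n : ℕ) (x : Fin n → ℝ) :
    ∑ i, x i * unifSenn n i.succ (Fin.last n) = (∑ i, x i) * (1/(2*(n:ℝ)*((n:ℝ)+1))) := by
  simp_rw [unifSenn_succ]
  have : ∀ i : Fin n, (Fin.last n : Fin (n+1)) ≠ i.castSucc :=
    fun i => (Fin.ne_of_lt (Fin.castSucc_lt_last i)).symm
  simp only [this, if_false, zero_add, if_true, Finset.sum_mul]

/- ## the quadratic form identity (general design) -/

lemma quadform (n t : ℕ) (ξ : Fin (n+1) → Fin t → ℝ) (x : Fin n → ℝ) :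
    ∑ i, ∑ j, x i * NA n t ξ i j * x j
      = (∑ i, repl n t ξ i.succ * x i ^ 2)
        - (t : ℝ) * ∑ k, (∑ i, x i * ξ i.succ k) ^ 2 := by
  have key : ∀ i j : Fin n,
      x i * NA n t ξ i j * x j
        = (if i = j then repl n t ξ i.succ * x i ^ 2 else 0)
          - ∑ k, (t : ℝ) * ((x i * ξ i.succ k) * (x j * ξ j.succ k)) := by
    intro i j
    unfold NA
    rw [show x i * ((if i = j then repl n t ξ i.succ else 0)
          - (t:ℝ) * ∑ k, ξ i.succ k * ξ j.succ k) * x j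
        = x i * (if i = j then repl n t ξ i.succ else 0) * x j
          - ((t:ℝ) * (x i * x j)) * ∑ k, ξ i.succ k * ξ j.succ k from by ring]
    congr 1
    · split_ifs with h
      · subst h; ring
      · ring
    · rw [Finset.mul_sum]
      exact Finset.sum_congr rfl fun k _ => by ring
  simp_rw [key, Finset.sum_sub_distrib]
  congr 1
  · simp only [Finset.sum_ite_eq, Finset.mem_univ, if_true]
  · have h2 : ∀ k : Fin t, (t:ℝ) * (∑ i, x i * ξ i.succ k)^2
        = ∑ i, ∑ j, (t:ℝ) * ((x i * ξ i.succ k) * (x j * ξ j.succ k)) := by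
      intro k
      rw [sq, Finset.sum_mul_sum, Finset.mul_sum]
      exact Finset.sum_congr rfl fun i _ => by rw [Finset.mul_sum]
    rw [Finset.mul_sum]
    simp_rw [h2]
    rw [Finset.sum_congr rfl fun (i : Fin n) _ =>
      Finset.sum_comm (s := (Finset.univ : Finset (Fin n))) (t := (Finset.univ : Finset (Fin t)))
        (f := fun (j : Fin n) (k : Fin t) => (t:ℝ) * ((x i * ξ i.succ k) * (x j * ξ j.succ k)))]
    rw [Finset.sum_comm]

/- ## quadratic form for unifSenn -/

lemma quadform_unifSenn (n : ℕ) (x : Fin n → ℝ) :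
    ∑ i, ∑ j, x i * NA n (n+1) (unifSenn n) i j * x j
      = (1/(2*((n:ℝ)+1)) + 1/(2*(n:ℝ)*((n:ℝ)+1))) * (∑ i, x i ^ 2)
        - ((n:ℝ)+1) * ((1/(2*((n:ℝ)+1)))^2 * (∑ i, x i ^ 2)
            + (1/(2*(n:ℝ)*((n:ℝ)+1)))^2 * (∑ i, x i)^2) := by
  rw [quadform]
  have e1 : (∑ i, repl n (n+1) (unifSenn n) i.succ * x i ^ 2)
      = (1/(2*((n:ℝ)+1)) + 1/(2*(n:ℝ)*((n:ℝ)+1))) * (∑ i, x i ^ 2) := by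
    rw [Finset.mul_sum]
    exact Finset.sum_congr rfl fun i _ => by rw [repl_unifSenn_succ]
  have e2 : ∑ k : Fin (n+1), (∑ i, x i * unifSenn n i.succ k) ^ 2
      = (1/(2*((n:ℝ)+1)))^2 * (∑ i, x i ^ 2) + (1/(2*(n:ℝ)*((n:ℝ)+1)))^2 * (∑ i, x i)^2 := by
    rw [Fin.sum_univ_castSucc, dot_unifSenn_last,
      Finset.sum_congr rfl fun (m : Fin n) _ => by rw [dot_unifSenn_cast n x m]]
    simp_rw [mul_pow]
    rw [← Finset.sum_mul]
    ring
  rw [e1, e2]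
  push_cast
  ring

/- ## boundedness of the Rayleigh set -/

lemma bddBelow_rayleigh (m : ℕ) (A : Matrix (Fin m) (Fin m) ℝ) :
    BddBelow { r : ℝ | ∃ x : Fin m → ℝ, ∑ i, x i ^ 2 = 1 ∧
      r = ∑ i, ∑ j, x i * A i j * x j } := by
  refine ⟨-∑ i, ∑ j, |A i j|, ?_⟩
  rintro r ⟨x, hx, rfl⟩
  have habs : ∀ i, |x i| ≤ 1 := by
    intro i
    have h1 : x i ^ 2 ≤ 1 := by
      rw [← hx]
      exact Finset.single_le_sum (f := fun i => x i ^ 2)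
        (fun i _ => sq_nonneg _) (Finset.mem_univ i)
    exact abs_le.mpr ⟨by nlinarith, by nlinarith⟩
  have hterm : ∀ i j, -|A i j| ≤ x i * A i j * x j := by
    intro i j
    have h2 : |x i * A i j * x j| ≤ |A i j| := by
      rw [abs_mul, abs_mul]
      calc |x i| * |A i j| * |x j| ≤ 1 * |A i j| * 1 := by
            gcongr <;> first | exact abs_nonneg _ | exact habs _
        _ = |A i j| := by ring
    linarith [neg_abs_le (x i * A i j * x j), h2]
  calc -∑ i, ∑ j, |A i j| = ∑ i, ∑ j, -|A i j| := by simp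
    _ ≤ ∑ i, ∑ j, x i * A i j * x j :=
        Finset.sum_le_sum fun i _ => Finset.sum_le_sum fun j _ => hterm i j

/- ## the uniform test vector -/

lemma testvec_sq (n : ℕ) (hn : 0 < n) :
    ∑ _i : Fin n, (Real.sqrt ((n:ℝ)⁻¹)) ^ 2 = 1 := by
  have h0 : (0:ℝ) < (n:ℝ) := by exact_mod_cast hn
  rw [Finset.sum_const, Real.sq_sqrt (by positivity)]
  simp [nsmul_eq_mul]
  field_simp

lemma testvec_sum_sq (n : ℕ) (hn : 0 < n) :
    (∑ _i : Fin n, Real.sqrt ((n:ℝ)⁻¹)) ^ 2 = (n:ℝ) := by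
  have h0 : (0:ℝ) < (n:ℝ) := by exact_mod_cast hn
  rw [Finset.sum_const]
  simp only [nsmul_eq_mul, Finset.card_univ, Fintype.card_fin]
  rw [mul_pow, Real.sq_sqrt (by positivity)]
  field_simp

/- ## escalation property -/

lemma unifSenn_escalation (n : ℕ) (hn : 2 ≤ n) : isEscalation n (n+1) (unifSenn n) := by
  have hn0 : (0:ℝ) < (n:ℝ) := by exact_mod_cast Nat.lt_of_lt_of_le Nat.zero_lt_two hn
  refine ⟨⟨?_, ?_⟩, ?_, ?_⟩
  · intro i k
    unfold unifSenn
    split_ifs <;> positivity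
  · rw [Fin.sum_univ_succ]
    have h0 : ∑ k : Fin (n+1), unifSenn n 0 k = ((n:ℝ)+1) * (1/(2*((n:ℝ)+1))) := by
      simp_rw [unifSenn_zero]
      rw [Finset.sum_const]
      simp only [Finset.card_univ, Fintype.card_fin, nsmul_eq_mul]
      push_cast
      ring
    have h1 : ∀ i : Fin n, ∑ k : Fin (n+1), unifSenn n i.succ k
        = 1/(2*((n:ℝ)+1)) + 1/(2*(n:ℝ)*((n:ℝ)+1)) := fun i => repl_unifSenn_succ n i
    rw [h0, Finset.sum_congr rfl fun i _ => h1 i, Finset.sum_const]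
    simp only [Finset.card_univ, Fintype.card_fin, nsmul_eq_mul]
    field_simp
    ring
  · intro i k h1 h2
    have a1 : i.val ≠ 0 := by omega
    have a2 : i.val ≠ k.val + 1 := by omega
    have a3 : k.val ≠ n := by omega
    simp [unifSenn, a1, a2, a3]
  · intro k
    rw [Fin.sum_univ_succ, unifSenn_zero]
    induction k using Fin.lastCases with
    | last =>
        have h1 : ∀ i : Fin n, (Fin.last n : Fin (n+1)) ≠ i.castSucc :=
          fun i => (Fin.ne_of_lt (Fin.castSucc_lt_last i)).symm
        simp_rw [unifSenn_succ]
        simp only [h1, if_false, zero_add, if_true, Finset.sum_const,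
          Finset.card_univ, Fintype.card_fin, nsmul_eq_mul]
        push_cast
        field_simp
        ring
    | cast m =>
        have h2 : (m.castSucc : Fin (n+1)) ≠ Fin.last n := Fin.ne_of_lt (Fin.castSucc_lt_last m)
        simp_rw [unifSenn_succ]
        simp only [h2, if_false, add_zero, Fin.castSucc_inj]
        rw [Finset.sum_ite_eq Finset.univ m (fun _ => 1/(2*((n:ℝ)+1)))]
        simp only [Finset.mem_univ, if_true]
        have hne : ((n:ℝ)+1) ≠ 0 := by positivity
        push_cast
        rw [div_add_div _ _ (by positivity) (by positivity)]
        rw [div_eq_div_iff (by positivity) (by positivity)]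
        ring

/- ## value of the quadratic form at the uniform test vector, unifSenn -/

lemma unifSenn_test_val (n : ℕ) (hn : 2 ≤ n) :
    ∑ i, ∑ j, (fun _ : Fin n => Real.sqrt ((n:ℝ)⁻¹)) i * NA n (n+1) (unifSenn n) i j
      * (fun _ : Fin n => Real.sqrt ((n:ℝ)⁻¹)) j = 1/(4*(n:ℝ)) := by
  have hn0 : (0:ℝ) < (n:ℝ) := by exact_mod_cast Nat.lt_of_lt_of_le Nat.zero_lt_two hn
  simp only []
  rw [quadform_unifSenn, testvec_sq n (by omega), testvec_sum_sq n (by omega)]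
  field_simp
  ring

lemma unifSenn_test_lb (n : ℕ) (hn : 2 ≤ n) (x : Fin n → ℝ) (hx : ∑ i, x i ^ 2 = 1) :
    1/(4*(n:ℝ)) ≤ ∑ i, ∑ j, x i * NA n (n+1) (unifSenn n) i j * x j := by
  have hn0 : (0:ℝ) < (n:ℝ) := by exact_mod_cast Nat.lt_of_lt_of_le Nat.zero_lt_two hn
  rw [quadform_unifSenn, hx]
  have hcs : (∑ i, x i)^2 ≤ (n:ℝ) := by
    have h := Finset.sum_mul_sq_le_sq_mul_sq Finset.univ x (fun _ => (1:ℝ))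
    simpa [hx] using h
  have hiden : (1/(2*((n:ℝ)+1)) + 1/(2*(n:ℝ)*((n:ℝ)+1)))
      - ((n:ℝ)+1) * ((1/(2*((n:ℝ)+1)))^2 + (1/(2*(n:ℝ)*((n:ℝ)+1)))^2 * (n:ℝ))
      = 1/(4*(n:ℝ)) := by
    field_simp
    ring
  have hD : 0 ≤ ((n:ℝ)+1) * (1/(2*(n:ℝ)*((n:ℝ)+1)))^2 := by positivity
  nlinarith [mul_nonneg hD (sub_nonneg.mpr hcs)]

/- ## upper bound for arbitrary designs -/

lemma general_test_ub (n : ℕ) (hn : 2 ≤ n) (ξ : Fin (n+1) → Fin (n+1) → ℝ) :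
    ∑ i, ∑ j, (fun _ : Fin n => Real.sqrt ((n:ℝ)⁻¹)) i * NA n (n+1) ξ i j
      * (fun _ : Fin n => Real.sqrt ((n:ℝ)⁻¹)) j ≤ 1/(4*(n:ℝ)) := by
  have hn0 : (0:ℝ) < (n:ℝ) := by exact_mod_cast Nat.lt_of_lt_of_le Nat.zero_lt_two hn
  have hc : Real.sqrt ((n:ℝ)⁻¹) ^ 2 = (n:ℝ)⁻¹ := Real.sq_sqrt (by positivity)
  simp only []
  rw [quadform]
  have e1 : ∑ i : Fin n, repl n (n+1) ξ i.succ * Real.sqrt ((n:ℝ)⁻¹) ^ 2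
      = (∑ i : Fin n, repl n (n+1) ξ i.succ) * (n:ℝ)⁻¹ := by
    simp_rw [hc]
    rw [Finset.sum_mul]
  have e2 : ∀ k : Fin (n+1), (∑ i : Fin n, Real.sqrt ((n:ℝ)⁻¹) * ξ i.succ k)^2
      = (n:ℝ)⁻¹ * (∑ i : Fin n, ξ i.succ k)^2 := by
    intro k
    rw [← Finset.mul_sum, mul_pow, hc]
  rw [e1]
  simp_rw [e2]
  rw [← Finset.mul_sum]
  have hsum : ∑ i : Fin n, repl n (n+1) ξ i.succ = ∑ k : Fin (n+1), ∑ i : Fin n, ξ i.succ k := by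
    unfold repl
    exact Finset.sum_comm
  rw [hsum]
  set S := ∑ k : Fin (n+1), ∑ i : Fin n, ξ i.succ k with hS
  set T := ∑ k : Fin (n+1), (∑ i : Fin n, ξ i.succ k)^2 with hT
  have hcs : S^2 ≤ T * ((n:ℝ)+1) := by
    have h := Finset.sum_mul_sq_le_sq_mul_sq Finset.univ
      (fun k : Fin (n+1) => ∑ i : Fin n, ξ i.succ k) (fun _ => (1:ℝ))
    simp only [mul_one, one_pow, Finset.sum_const, Finset.card_univ, Fintype.card_fin,
      nsmul_eq_mul] at h
    rw [hS, hT]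
    push_cast at h ⊢
    linarith
  have h3 : S - ((n:ℝ)+1) * T ≤ 1/4 := by nlinarith [sq_nonneg (S - 1/2)]
  have hcast : ((n+1 : ℕ) : ℝ) = (n:ℝ) + 1 := by push_cast; ring
  rw [hcast]
  calc S * (n:ℝ)⁻¹ - ((n:ℝ)+1) * ((n:ℝ)⁻¹ * T) = (n:ℝ)⁻¹ * (S - ((n:ℝ)+1)*T) := by ring
    _ ≤ (n:ℝ)⁻¹ * (1/4) := mul_le_mul_of_nonneg_left h3 (by positivity)
    _ = 1/(4*(n:ℝ)) := by rw [one_div, one_div, mul_inv]; ring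


/-- The uniformly extended Senn design is an extended dose-escalation design,
attains λ_min(N_A) = 1/(4n), and is E-optimal among extended designs. -/
theorem stmt4 (n : ℕ) (hn : 2 ≤ n) :
    isEscalation n (n+1) (unifSenn n) ∧
    lambdaMin (NA n (n+1) (unifSenn n)) = 1 / (4 * n) ∧
    (∀ ξ : Fin (n+1) → Fin (n+1) → ℝ, isEscalation n (n+1) ξ →
      lambdaMin (NA n (n+1) ξ) ≤ lambdaMin (NA n (n+1) (unifSenn n))) := by
  have hn0 : 0 < n := by omega
  have hx0 : ∑ i : Fin n, (fun _ : Fin n => Real.sqrt ((n:ℝ)⁻¹)) i ^ 2 = 1 :=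
    testvec_sq n hn0
  have hmain : lambdaMin (NA n (n+1) (unifSenn n)) = 1 / (4 * n) := by
    apply le_antisymm
    · apply csInf_le (bddBelow_rayleigh n _)
      exact ⟨fun _ => Real.sqrt ((n:ℝ)⁻¹), hx0, (unifSenn_test_val n hn).symm⟩
    · refine le_csInf ?_ ?_
      · exact ⟨_, ⟨fun _ => Real.sqrt ((n:ℝ)⁻¹), hx0, rfl⟩⟩
      · rintro r ⟨x, hx, rfl⟩
        exact unifSenn_test_lb n hn x hx
  refine ⟨unifSenn_escalation n hn, hmain, ?_⟩
  intro ξ _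
  rw [hmain]
  calc lambdaMin (NA n (n+1) ξ)
      ≤ ∑ i, ∑ j, (fun _ : Fin n => Real.sqrt ((n:ℝ)⁻¹)) i * NA n (n+1) ξ i j
        * (fun _ : Fin n => Real.sqrt ((n:ℝ)⁻¹)) j :=
        csInf_le (bddBelow_rayleigh n _) ⟨fun _ => Real.sqrt ((n:ℝ)⁻¹), hx0, rfl⟩
    _ ≤ 1/(4*(n:ℝ)) := general_test_ub n hn ξ
end
end

section
/- Let ξ be an extended dose-escalation design (t = n+1) with ξ(0,k) = 1/(2(n+1)) for every cohort k = 1,…,n+1 and r_1(ξ) = … = r_n(ξ) = 1/(2n). Then the all-ones vector 1_n is an eigenvector of N_A(ξ) with eigenvalue 1/(4n), i.e., N_A(ξ)·1_n = (1/(4n))·1_n. -/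
noncomputable section

open Matrix Finset

/-- For an extended design (t = n+1) with ξ(0,k) = 1/(2(n+1)) for all cohorts
and r_1 = … = r_n = 1/(2n), the all-ones vector is an eigenvector of N_A(ξ)
with eigenvalue 1/(4n). -/
theorem stmt6 (n : ℕ) (hn : 2 ≤ n) (ξ : Fin (n+1) → Fin (n+1) → ℝ)
    (hξ : isEscalation n (n+1) ξ)
    (h0 : ∀ k : Fin (n+1), ξ 0 k = 1 / (2 * (n + 1)))
    (hr : ∀ i : Fin n, repl n (n+1) ξ i.succ = 1 / (2 * n)) :
    (NA n (n+1) ξ).mulVec (fun _ => 1) = fun _ => 1 / (4 * (n : ℝ)) := by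
  funext i
  have hnpos : (0:ℝ) < n := by positivity
  have hcol : ∀ k : Fin (n+1), ∑ j : Fin n, ξ j.succ k = 1 / (2 * (n + 1)) := by
    intro k
    have hsum := hξ.2.2 k
    rw [Fin.sum_univ_succ] at hsum
    have : (((n:ℝ)+1)) ≠ 0 := by positivity
    have h0k := h0 k
    push_cast at hsum ⊢
    have heq : ∑ i : Fin n, ξ i.succ k = 1/((n:ℝ)+1) - 1/(2*((n:ℝ)+1)) := by
      rw [h0k] at hsum; linarith
    rw [heq]; field_simp; ring
  have key : ∑ k : Fin (n+1), ξ i.succ k * ∑ j : Fin n, ξ j.succ k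
      = (1/(2*n)) * (1/(2*((n:ℝ)+1))) := by
    have : ∀ k : Fin (n+1), ξ i.succ k * ∑ j : Fin n, ξ j.succ k
        = ξ i.succ k * (1/(2*((n:ℝ)+1))) := by
      intro k; rw [hcol k]
    rw [Finset.sum_congr rfl (fun k _ => this k), ← Finset.sum_mul]
    have := hr i
    unfold repl at this
    rw [this]
  simp only [Matrix.mulVec, dotProduct, Pi.one_apply, mul_one, NA]
  rw [Finset.sum_sub_distrib]
  have h1 : ∑ j : Fin n, (if i = j then repl n (n+1) ξ i.succ else 0) = 1/(2*(n:ℝ)) := by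
    rw [Finset.sum_ite_eq Finset.univ i (fun _ => repl n (n+1) ξ i.succ)]
    simp [hr i]
  rw [h1]
  have h2 : ∑ j : Fin n, ((n:ℝ)+1) * ∑ k, ξ i.succ k * ξ j.succ k
      = ((n:ℝ)+1) * ((1/(2*n)) * (1/(2*((n:ℝ)+1)))) := by
    rw [← Finset.mul_sum, Finset.sum_comm]
    congr 1
    rw [← key]
    exact Finset.sum_congr rfl (fun k _ => (Finset.mul_sum _ _ _).symm)
  push_cast
  rw [h2]
  field_simp
  ring
end
end

section
/- For every standard dose-escalation design ξ (t = n) with N_A(ξ) invertible, 1_n^T N_A(ξ)^{-1} 1_n ≥ 4n², and the Senn design attains equality (indeed N_A of the Senn design equals (1/(4n))·I_n). Consequently, the Senn design (the E-optimal standard design) is c-optimal for the average dose effect compared with the placebo: it minimizes the variance of the least-squares estimator of (1/n)∑_{i=1}^n τ_i − τ_0, which is proportional to (1/n²)·1_n^T N_A(ξ)^{-1} 1_n. -/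
noncomputable section

open Matrix Finset

lemma qform (n t : ℕ) (ξ : Fin (n+1) → Fin t → ℝ) (x : Fin n → ℝ) :
    x ⬝ᵥ (NA n t ξ) *ᵥ x
      = ∑ k, ((∑ i, x i ^ 2 * ξ i.succ k) - (t:ℝ) * (∑ i, x i * ξ i.succ k) ^ 2) := by
  have lhs : x ⬝ᵥ (NA n t ξ) *ᵥ x = ∑ i, ∑ j, x i * (NA n t ξ i j) * x j := by
    simp [dotProduct, mulVec, Finset.mul_sum]; ring_nf
  have key : ∀ i j : Fin n, x i * (NA n t ξ i j) * x j
      = x i * (if i = j then repl n t ξ i.succ else 0) * x j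
        - ∑ k, (t:ℝ) * ((x i * ξ i.succ k) * (x j * ξ j.succ k)) := by
    intro i j
    simp only [NA, Finset.mul_sum]
    rw [mul_sub, sub_mul, Finset.mul_sum, Finset.sum_mul]
    congr 1
    exact Finset.sum_congr rfl fun k _ => by ring
  have diag : ∑ i, ∑ j, (x i * if i = j then repl n t ξ i.succ else 0) * x j
      = ∑ k, ∑ i, x i ^ 2 * ξ i.succ k := by
    have h1 : ∀ i : Fin n, ∑ j, (x i * if i = j then repl n t ξ i.succ else 0) * x j
        = ∑ k, x i ^ 2 * ξ i.succ k := by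
      intro i
      simp only [mul_ite, ite_mul, mul_zero, zero_mul, Finset.sum_ite_eq,
        Finset.mem_univ, if_true]
      rw [repl, Finset.mul_sum, Finset.sum_mul]
      exact Finset.sum_congr rfl fun k _ => by ring
    simp only [h1]
    exact Finset.sum_comm
  have cross : ∑ k, (t:ℝ) * (∑ i, x i * ξ i.succ k) ^ 2
      = ∑ i, ∑ j, ∑ k, (t:ℝ) * ((x i * ξ i.succ k) * (x j * ξ j.succ k)) := by
    have h1 : ∀ k : Fin t, (t:ℝ) * (∑ i, x i * ξ i.succ k) ^ 2
        = ∑ i, ∑ j, (t:ℝ) * ((x i * ξ i.succ k) * (x j * ξ j.succ k)) := by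
      intro k
      rw [sq, Finset.sum_mul_sum, Finset.mul_sum]
      exact Finset.sum_congr rfl fun i _ => by rw [Finset.mul_sum]
    simp only [h1]
    rw [Finset.sum_comm]
    exact Finset.sum_congr rfl fun i _ => Finset.sum_comm
  rw [lhs]
  simp only [key, Finset.sum_sub_distrib]
  rw [diag, ← cross]

lemma NA_symm (n t : ℕ) (ξ : Fin (n+1) → Fin t → ℝ) : (NA n t ξ)ᵀ = NA n t ξ := by
  ext i j
  simp only [Matrix.transpose_apply, NA]
  congr 1
  · by_cases h : i = j
    · subst h; rfl
    · rw [if_neg h, if_neg (Ne.symm h)]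
  · congr 1
    exact Finset.sum_congr rfl fun k _ => mul_comm _ _

lemma main_ineq (n : ℕ) (hn : 2 ≤ n) (ξ : Fin (n+1) → Fin n → ℝ)
    (hesc : isEscalation n n ξ) (hdet : IsUnit (NA n n ξ).det) :
    4 * (n : ℝ) ^ 2 ≤ ∑ i, ∑ j, (NA n n ξ)⁻¹ i j := by
  obtain ⟨⟨hpos, -⟩, -, hcoh⟩ := hesc
  have hn0 : (0:ℝ) < n := by positivity
  set A := NA n n ξ with hA
  set s : Fin n → ℝ := fun k => ∑ i : Fin n, ξ i.succ k with hs
  have hs0 : ∀ k, 0 ≤ s k := fun k => Finset.sum_nonneg fun i _ => hpos _ _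
  have hs1 : ∀ k, s k ≤ 1 / n := by
    intro k
    have h := hcoh k
    rw [Fin.sum_univ_succ] at h
    have := hpos 0 k
    simp only [hs]
    linarith
  have hQ : ∀ x : Fin n → ℝ, 0 ≤ x ⬝ᵥ A *ᵥ x := by
    intro x
    rw [hA, qform]
    refine Finset.sum_nonneg fun k _ => ?_
    have hxw : 0 ≤ ∑ i, x i ^ 2 * ξ i.succ k :=
      Finset.sum_nonneg fun i _ => mul_nonneg (sq_nonneg _) (hpos _ _)
    have cs : (∑ i, x i * ξ i.succ k) ^ 2
        ≤ (∑ i, x i ^ 2 * ξ i.succ k) * s k := by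
      have h := Finset.sum_mul_sq_le_sq_mul_sq Finset.univ
        (fun i => x i * Real.sqrt (ξ i.succ k)) (fun i => Real.sqrt (ξ i.succ k))
      have e1 : ∀ i : Fin n, (x i * Real.sqrt (ξ i.succ k)) * Real.sqrt (ξ i.succ k)
          = x i * ξ i.succ k := by
        intro i; rw [mul_assoc, Real.mul_self_sqrt (hpos _ _)]
      have e2 : ∀ i : Fin n, (x i * Real.sqrt (ξ i.succ k)) ^ 2
          = x i ^ 2 * ξ i.succ k := by
        intro i; rw [mul_pow, Real.sq_sqrt (hpos _ _)]
      have e3 : ∀ i : Fin n, (Real.sqrt (ξ i.succ k)) ^ 2 = ξ i.succ k :=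
        fun i => Real.sq_sqrt (hpos _ _)
      simp only [e1, e2, e3] at h
      exact h
    have : (n:ℝ) * (∑ i, x i * ξ i.succ k) ^ 2 ≤ ∑ i, x i ^ 2 * ξ i.succ k := by
      calc (n:ℝ) * (∑ i, x i * ξ i.succ k) ^ 2
          ≤ (n:ℝ) * ((∑ i, x i ^ 2 * ξ i.succ k) * s k) := by
            exact mul_le_mul_of_nonneg_left cs hn0.le
        _ ≤ (n:ℝ) * ((∑ i, x i ^ 2 * ξ i.succ k) * (1/n)) := by
            refine mul_le_mul_of_nonneg_left ?_ hn0.le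
            exact mul_le_mul_of_nonneg_left (hs1 k) hxw
        _ = ∑ i, x i ^ 2 * ξ i.succ k := by field_simp
    linarith
  set one : Fin n → ℝ := fun _ => 1 with hone
  set v : Fin n → ℝ := A⁻¹ *ᵥ one with hv
  have hAv : A *ᵥ v = one := by
    rw [hv, Matrix.mulVec_mulVec, Matrix.mul_nonsing_inv _ hdet, Matrix.one_mulVec]
  set b : ℝ := ∑ i, ∑ j, A⁻¹ i j with hb
  have hvone : v ⬝ᵥ one = b := by
    simp [hv, hb, dotProduct, mulVec, hone, mul_one]
  have honeone : one ⬝ᵥ one = (n:ℝ) := by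
    simp [dotProduct, hone]
  set a : ℝ := one ⬝ᵥ A *ᵥ one with ha
  have hvA : v ᵥ* A = one := by
    rw [← Matrix.mulVec_transpose, NA_symm, ← hA, hAv]
  have hquad : ∀ c : ℝ, 0 ≤ b * (c * c) + (2 * n) * c + a := by
    intro c
    have h := hQ (one + c • v)
    rw [Matrix.mulVec_add, Matrix.mulVec_smul, hAv, dotProduct_add, add_dotProduct,
      add_dotProduct, dotProduct_smul, smul_dotProduct, smul_dotProduct,
      dotProduct_smul, Matrix.dotProduct_mulVec v, hvA, honeone, hvone] at h
    have heq : b * (c * c) + (2 * n) * c + a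
        = one ⬝ᵥ A *ᵥ one + c • (n:ℝ) + (c • (n:ℝ) + c • c • b) := by
      rw [← ha]; simp only [smul_eq_mul]; ring
    rw [heq]
    exact h
  have ha4 : a ≤ 1 / 4 := by
    have he : a = ∑ k, (s k - (n:ℝ) * (s k) ^ 2) := by
      rw [ha, hA, qform]
      refine Finset.sum_congr rfl fun k _ => ?_
      simp [hone, hs]
    rw [he]
    have hbound : ∀ k ∈ Finset.univ, s k - (n:ℝ) * (s k) ^ 2 ≤ 1 / (4 * n) := by
      intro k _
      rw [le_div_iff₀ (by positivity : (0:ℝ) < 4 * n)]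
      nlinarith [sq_nonneg (2 * (n:ℝ) * s k - 1)]
    calc ∑ k, (s k - (n:ℝ) * (s k) ^ 2) ≤ ∑ k : Fin n, 1 / (4 * (n:ℝ)) :=
          Finset.sum_le_sum hbound
      _ = 1 / 4 := by
          rw [Finset.sum_const, Finset.card_univ, Fintype.card_fin, nsmul_eq_mul]
          field_simp
  have ha0 : 0 ≤ a := hQ one
  have hdisc : discrim b (2 * n) a ≤ 0 := discrim_le_zero hquad
  rw [discrim] at hdisc
  have hn2 : (2:ℝ) ≤ n := by exact_mod_cast hn
  have h1 : (n:ℝ)^2 ≤ b * a := by nlinarith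
  have hb0 : 0 < b := by
    by_contra hc
    push_neg at hc
    have : b * a ≤ 0 := mul_nonpos_of_nonpos_of_nonneg hc ha0
    nlinarith
  have h2 : b * a ≤ b * (1/4) := mul_le_mul_of_nonneg_left ha4 hb0.le
  nlinarith

lemma senn_succ (n : ℕ) (i k : Fin n) :
    senn n i.succ k = if k = i then 1 / (2 * (n:ℝ)) else 0 := by
  by_cases h : k = i
  · subst h; simp [senn, Fin.val_succ]
  · have hno : ¬ (i.val + 1 = 0 ∨ i.val + 1 = k.val + 1) := by
      push_neg
      refine ⟨by omega, fun hc => h (Fin.ext (by omega)).symm⟩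
    simp only [senn, Fin.val_succ]
    rw [if_neg hno, if_neg h]

lemma senn_NA (n : ℕ) (hn : 2 ≤ n) :
    NA n n (senn n) = (1 / (4 * (n : ℝ))) • (1 : Matrix (Fin n) (Fin n) ℝ) := by
  have hn0 : (n:ℝ) ≠ 0 := by positivity
  ext i j
  have hr : repl n n (senn n) i.succ = 1 / (2 * (n:ℝ)) := by
    simp [repl, senn_succ]
  have hp : ∑ k, senn n i.succ k * senn n j.succ k
      = if i = j then 1 / (2 * (n:ℝ)) * (1 / (2 * (n:ℝ))) else 0 := by
    simp only [senn_succ, ite_mul, mul_ite, zero_mul, mul_zero,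
      Finset.sum_ite_eq', Finset.sum_ite_eq, Finset.mem_univ, if_true]
    simp [eq_comm]
  simp only [NA, hr, hp, Matrix.smul_apply, Matrix.one_apply, smul_eq_mul]
  by_cases h : i = j
  · simp only [h, if_true]
    field_simp
    ring
  · simp [h]

/-- For every standard dose-escalation design with invertible N_A, the sum of
all entries of N_A(ξ)⁻¹ is at least 4n²; the Senn design satisfies
N_A = (1/(4n))·I and attains the value 4n². Hence the Senn design minimizes
the variance of the least-squares estimator of (1/n)∑ᵢ τᵢ − τ₀, which is
proportional to (1/n²)·1ₙ^T N_A(ξ)⁻¹ 1ₙ. -/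
theorem stmt8 (n : ℕ) (hn : 2 ≤ n) :
    (∀ ξ : Fin (n+1) → Fin n → ℝ, isEscalation n n ξ → IsUnit (NA n n ξ).det →
      4 * (n : ℝ) ^ 2 ≤ ∑ i, ∑ j, (NA n n ξ)⁻¹ i j) ∧
    NA n n (senn n) = (1 / (4 * (n : ℝ))) • (1 : Matrix (Fin n) (Fin n) ℝ) ∧
    ∑ i, ∑ j, (NA n n (senn n))⁻¹ i j = 4 * (n : ℝ) ^ 2 := by
  have hn0 : (n:ℝ) ≠ 0 := by positivity
  refine ⟨fun ξ hesc hdet => main_ineq n hn ξ hesc hdet, senn_NA n hn, ?_⟩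
  have hinv : (NA n n (senn n))⁻¹ = (4 * (n:ℝ)) • (1 : Matrix (Fin n) (Fin n) ℝ) := by
    rw [senn_NA n hn]
    apply Matrix.inv_eq_right_inv
    rw [Matrix.smul_mul, Matrix.one_mul, smul_smul]
    have : (1 / (4 * (n:ℝ))) * (4 * n) = 1 := by field_simp
    rw [this, one_smul]
  rw [hinv]
  have : ∀ i : Fin n, ∑ j, ((4 * (n:ℝ)) • (1 : Matrix (Fin n) (Fin n) ℝ)) i j
      = 4 * (n:ℝ) := by
    intro i
    simp only [Matrix.smul_apply, Matrix.one_apply, smul_eq_mul, mul_ite, mul_one,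
      mul_zero, Finset.sum_ite_eq, Finset.mem_univ, if_true]
  simp only [this]
  rw [Finset.sum_const, Finset.card_univ, Fintype.card_fin, nsmul_eq_mul]
  ring
end
end

section
/- Let c_n ∈ ℝ^{n+t+2} (t = n) be the vector with −1 in the coordinate of τ_0, +1 in the coordinate of τ_n, and 0 elsewhere. For every standard dose-escalation design ξ and every vector u with M(ξ)u = c_n, one has c_n^T u ≥ 4n. Moreover, for the Senn design ξ_S there exists u with M(ξ_S)u = c_n and c_n^T u = 4n. Hence the Senn design is c-optimal for estimating τ_n − τ_0 among standard dose-escalation designs. -/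
noncomputable section

open Matrix Finset

/-- Index of the parameter vector β = (τ₀,…,τₙ, μ, θ₁,…,θ_t) ∈ ℝ^{n+t+2}. -/
abbrev PIdx (n t : ℕ) := Fin (n+1) ⊕ (Unit ⊕ Fin t)

/-- The regression vector f(i,k) = (e_{i+1}^T, 1, e_k^T)^T. -/
def fvec (n t : ℕ) (i : Fin (n+1)) (k : Fin t) : PIdx n t → ℝ :=
  fun j => match j with
  | Sum.inl a => if a = i then 1 else 0
  | Sum.inr (Sum.inl _) => 1
  | Sum.inr (Sum.inr b) => if b = k then 1 else 0

/-- The moment matrix M(ξ) = ∑_{i,k} ξ(i,k) f(i,k) f(i,k)^T. -/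
def momM (n t : ℕ) (ξ : Fin (n+1) → Fin t → ℝ) : Matrix (PIdx n t) (PIdx n t) ℝ :=
  ∑ i, ∑ k, ξ i k • Matrix.vecMulVec (fvec n t i k) (fvec n t i k)

/-- The stage-k moment matrix M^{(k)}(ξ): only trials in the first k cohorts
(cohorts with cohort number ≤ k) are kept. -/
def momMstage (n t : ℕ) (ξ : Fin (n+1) → Fin t → ℝ) (k : ℕ) :
    Matrix (PIdx n t) (PIdx n t) ℝ :=
  ∑ i, ∑ j ∈ Finset.univ.filter (fun j : Fin t => j.val < k),
    ξ i j • Matrix.vecMulVec (fvec n t i j) (fvec n t i j)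

/-- The vector c_k, with −1 in the coordinate of τ₀, +1 in the coordinate of
τ_k, and 0 elsewhere (so c_k^T β = τ_k − τ₀). -/
def cvec (n t k : ℕ) : PIdx n t → ℝ :=
  fun j => match j with
  | Sum.inl a => if a.val = 0 then -1 else if a.val = k then 1 else 0
  | Sum.inr _ => 0

/- ----------------- auxiliary material ----------------- -/

lemma fvec_dot {n t : ℕ} (i : Fin (n+1)) (k : Fin t) (v : PIdx n t → ℝ) :
    fvec n t i k ⬝ᵥ v = v (Sum.inl i) + v (Sum.inr (Sum.inl ())) + v (Sum.inr (Sum.inr k)) := by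
  simp [dotProduct, Fintype.sum_sum_type, fvec, ite_mul]
  ring

lemma momM_mulVec_apply {n t : ℕ} (ξ : Fin (n+1) → Fin t → ℝ) (u : PIdx n t → ℝ) (j : PIdx n t) :
    (momM n t ξ).mulVec u j = ∑ i, ∑ k, ξ i k * (fvec n t i k ⬝ᵥ u) * fvec n t i k j := by
  simp only [momM, mulVec, dotProduct, Finset.sum_apply, Matrix.sum_apply, Matrix.smul_apply,
    vecMulVec_apply, smul_eq_mul, Finset.sum_mul]
  rw [Finset.sum_comm]
  refine Finset.sum_congr rfl fun i _ => ?_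
  rw [Finset.sum_comm]
  refine Finset.sum_congr rfl fun k _ => ?_
  rw [Finset.mul_sum, Finset.sum_mul]
  refine Finset.sum_congr rfl fun x _ => ?_
  ring

lemma momM_bilin {n t : ℕ} (ξ : Fin (n+1) → Fin t → ℝ) (v u : PIdx n t → ℝ) :
    v ⬝ᵥ (momM n t ξ).mulVec u
      = ∑ i, ∑ k, ξ i k * ((fvec n t i k ⬝ᵥ v) * (fvec n t i k ⬝ᵥ u)) := by
  calc v ⬝ᵥ (momM n t ξ).mulVec u
      = ∑ j, v j * ∑ i, ∑ k, ξ i k * (fvec n t i k ⬝ᵥ u) * fvec n t i k j := by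
        refine Finset.sum_congr rfl fun j _ => ?_
        rw [momM_mulVec_apply]
    _ = ∑ j, ∑ i, ∑ k, v j * (ξ i k * (fvec n t i k ⬝ᵥ u) * fvec n t i k j) := by
        simp only [Finset.mul_sum]
    _ = ∑ i, ∑ k, ξ i k * ((fvec n t i k ⬝ᵥ v) * (fvec n t i k ⬝ᵥ u)) := by
        rw [Finset.sum_comm]
        refine Finset.sum_congr rfl fun i _ => ?_
        rw [Finset.sum_comm]
        refine Finset.sum_congr rfl fun k _ => ?_
        rw [show fvec n t i k ⬝ᵥ v = ∑ j, fvec n t i k j * v j from rfl, Finset.sum_mul,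
          Finset.mul_sum]
        refine Finset.sum_congr rfl fun j _ => ?_
        ring

/-- the certificate vector h -/
def hv (n : ℕ) : PIdx n n → ℝ :=
  fun j => match j with
  | Sum.inl a => if a.val = n then 1/2 else -(1/2)
  | Sum.inr (Sum.inl _) => 0
  | Sum.inr (Sum.inr b) => if b.val = n-1 then 0 else 1/2

/-- the optimal solution vector for the Senn design -/
def uv (n : ℕ) : PIdx n n → ℝ :=
  fun j => match j with
  | Sum.inl a => if a.val = n then 2*n else -(2*n)
  | Sum.inr (Sum.inl _) => 0
  | Sum.inr (Sum.inr b) => if b.val = n-1 then 0 else 2*n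

lemma cvec_inl {n : ℕ} (hn : 1 ≤ n) (a : Fin (n+1)) :
    cvec n n n (Sum.inl a) = (if a = (⟨n, by omega⟩ : Fin (n+1)) then 1 else 0)
      + (if a = (⟨0, by omega⟩ : Fin (n+1)) then -1 else 0) := by
  simp only [cvec, Fin.ext_iff]
  split_ifs <;> norm_num <;> omega

lemma cvec_inl_sum {n : ℕ} (hn : 1 ≤ n) :
    ∑ a : Fin (n+1), cvec n n n (Sum.inl a) = 0 := by
  simp only [cvec_inl hn, Finset.sum_add_distrib, Finset.sum_ite_eq', Finset.mem_univ, if_true]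
  norm_num

lemma cvec_dot {n : ℕ} (hn : 1 ≤ n) (u : PIdx n n → ℝ) :
    cvec n n n ⬝ᵥ u = u (Sum.inl ⟨n, by omega⟩) - u (Sum.inl ⟨0, by omega⟩) := by
  simp only [dotProduct, Fintype.sum_sum_type, cvec_inl hn]
  simp [cvec, add_mul, ite_mul, Finset.sum_add_distrib, sub_eq_add_neg]
  rw [Finset.sum_eq_single 0] <;> simp_all

/-- c-optimality of the Senn design for estimating τₙ − τ₀ (t = n): for every
standard dose-escalation design ξ and every u with M(ξ)u = cₙ one has
cₙ^T u ≥ 4n, and the Senn design attains the value 4n. -/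
theorem stmt10 (n : ℕ) (hn : 2 ≤ n) :
    (∀ ξ : Fin (n+1) → Fin n → ℝ, isEscalation n n ξ →
      ∀ u : PIdx n n → ℝ, (momM n n ξ).mulVec u = cvec n n n →
        4 * (n : ℝ) ≤ cvec n n n ⬝ᵥ u) ∧
    (∃ u : PIdx n n → ℝ, (momM n n (senn n)).mulVec u = cvec n n n ∧
      cvec n n n ⬝ᵥ u = 4 * (n : ℝ)) := by
  have hn1 : 1 ≤ n := by omega
  have hnR : (0:ℝ) < n := Nat.cast_pos.mpr (by omega)
  have hn0 : (n:ℝ) ≠ 0 := ne_of_gt hnR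
  have klastlt : n - 1 < n := by omega
  have e1 : hv n (Sum.inl ⟨n, by omega⟩) = 1/2 := by simp [hv]
  have e2 : hv n (Sum.inl ⟨0, by omega⟩) = -(1/2) := by
    simp only [hv]; rw [if_neg]; omega
  constructor
  · intro ξ hesc u hu
    obtain ⟨⟨hpos, _⟩, hzero, hcoh⟩ := hesc
    have hHdot : ∀ (i : Fin (n+1)) (k : Fin n), fvec n n i k ⬝ᵥ hv n
        = hv n (Sum.inl i) + hv n (Sum.inr (Sum.inr k)) := by
      intro i k; rw [fvec_dot]
      simp only [hv]
      ring
    -- the quadratic form in h equals 1/(4n)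
    have hA : ∑ i, ∑ k, ξ i k * ((fvec n n i k ⬝ᵥ hv n) * (fvec n n i k ⬝ᵥ hv n))
        = 1/(4*n) := by
      rw [Finset.sum_comm]
      rw [Finset.sum_eq_single (⟨n-1, klastlt⟩ : Fin n)]
      · have hterm : ∀ i : Fin (n+1),
            ξ i ⟨n-1, klastlt⟩ * ((fvec n n i ⟨n-1, klastlt⟩ ⬝ᵥ hv n) *
              (fvec n n i ⟨n-1, klastlt⟩ ⬝ᵥ hv n)) = ξ i ⟨n-1, klastlt⟩ * (1/4) := by
          intro i
          rw [hHdot]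
          have hθ : hv n (Sum.inr (Sum.inr (⟨n-1, klastlt⟩ : Fin n))) = 0 := by
            simp [hv]
          rw [hθ, add_zero]
          simp only [hv]
          split_ifs <;> norm_num
        rw [Finset.sum_congr rfl fun i _ => hterm i, ← Finset.sum_mul,
          hcoh ⟨n-1, klastlt⟩]
        field_simp
      · intro k _ hk
        have hkv : k.val < n - 1 := by
          have := k.isLt
          have : k.val ≠ n - 1 := fun h => hk (Fin.ext h)
          omega
        apply Finset.sum_eq_zero
        intro i _
        by_cases hik : i.val ≤ k.val + 1
        · have h1 : hv n (Sum.inl i) = -(1/2) := by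
            simp only [hv]; rw [if_neg]; omega
          have h2 : hv n (Sum.inr (Sum.inr k)) = 1/2 := by
            simp only [hv]; rw [if_neg]; omega
          rw [hHdot, h1, h2]
          ring
        · rw [hzero i k (by omega) (by omega)]
          ring
      · intro h; exact absurd (Finset.mem_univ _) h
    -- the mixed form equals 1
    have hHc : ∑ i, ∑ k, ξ i k * ((fvec n n i k ⬝ᵥ hv n) * (fvec n n i k ⬝ᵥ u)) = 1 := by
      rw [← momM_bilin, hu, dotProduct_comm, cvec_dot hn1, e1, e2]
      norm_num
    -- the quadratic form in u equals c^T u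
    have hB : cvec n n n ⬝ᵥ u
        = ∑ i, ∑ k, ξ i k * ((fvec n n i k ⬝ᵥ u) * (fvec n n i k ⬝ᵥ u)) := by
      rw [← hu, dotProduct_comm, momM_bilin]
    -- Cauchy-Schwarz
    set F : Fin (n+1) × Fin n → ℝ :=
      fun p => Real.sqrt (ξ p.1 p.2) * (fvec n n p.1 p.2 ⬝ᵥ hv n) with hF
    set G : Fin (n+1) × Fin n → ℝ :=
      fun p => Real.sqrt (ξ p.1 p.2) * (fvec n n p.1 p.2 ⬝ᵥ u) with hG
    have sq_split : ∀ (i : Fin (n+1)) (k : Fin n),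
        Real.sqrt (ξ i k) * Real.sqrt (ξ i k) = ξ i k :=
      fun i k => Real.mul_self_sqrt (hpos i k)
    have key := Finset.sum_mul_sq_le_sq_mul_sq Finset.univ F G
    have eFG : ∑ p ∈ Finset.univ, F p * G p = 1 := by
      rw [← hHc, Fintype.sum_prod_type]
      refine Finset.sum_congr rfl fun i _ => Finset.sum_congr rfl fun k _ => ?_
      simp only [hF, hG]
      conv_rhs => rw [← sq_split i k]
      ring
    have eF2 : ∑ p ∈ Finset.univ, F p ^ 2 = 1/(4*n) := by
      rw [← hA, Fintype.sum_prod_type]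
      refine Finset.sum_congr rfl fun i _ => Finset.sum_congr rfl fun k _ => ?_
      simp only [hF]
      conv_rhs => rw [← sq_split i k]
      ring
    have eG2 : ∑ p ∈ Finset.univ, G p ^ 2 = cvec n n n ⬝ᵥ u := by
      rw [hB, Fintype.sum_prod_type]
      refine Finset.sum_congr rfl fun i _ => Finset.sum_congr rfl fun k _ => ?_
      simp only [hG]
      conv_rhs => rw [← sq_split i k]
      ring
    rw [eFG, eF2, eG2, one_pow] at key
    have h4n : (0:ℝ) < 4 * n := by linarith
    rw [one_div, inv_mul_eq_div, le_div_iff₀ h4n, one_mul] at key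
    linarith
  · refine ⟨uv n, ?_, ?_⟩
    · funext j
      rw [momM_mulVec_apply]
      have hw : ∀ (i : Fin (n+1)) (k : Fin n), senn n i k * (fvec n n i k ⬝ᵥ uv n)
          = if k.val = n-1 then cvec n n n (Sum.inl i) else 0 := by
        intro i k
        rw [fvec_dot]
        have hk := k.isLt
        have hi := i.isLt
        simp only [senn, uv, cvec]
        split_ifs <;> (try (exfalso; omega)) <;> field_simp <;> ring
      calc ∑ i, ∑ k, senn n i k * (fvec n n i k ⬝ᵥ uv n) * fvec n n i k j
          = ∑ i, ∑ k, (if k.val = n-1 then cvec n n n (Sum.inl i) * fvec n n i k j else 0) := by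
            refine Finset.sum_congr rfl fun i _ => Finset.sum_congr rfl fun k _ => ?_
            rw [hw i k, ite_mul, zero_mul]
        _ = ∑ i, cvec n n n (Sum.inl i) * fvec n n i ⟨n-1, klastlt⟩ j := by
            refine Finset.sum_congr rfl fun i _ => ?_
            rw [Finset.sum_eq_single (⟨n-1, klastlt⟩ : Fin n), if_pos rfl]
            · intro k _ hk
              rw [if_neg]
              intro h; exact hk (Fin.ext h)
            · intro h; exact absurd (Finset.mem_univ _) h
        _ = cvec n n n j := by
            match j with
            | Sum.inl a =>
              simp only [fvec, mul_ite, mul_one, mul_zero]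
              rw [Finset.sum_ite_eq]
              simp
            | Sum.inr (Sum.inl _) =>
              simp only [fvec, mul_one]
              rw [cvec_inl_sum hn1]
              simp [cvec]
            | Sum.inr (Sum.inr b) =>
              simp only [fvec, mul_ite, mul_one, mul_zero]
              by_cases hb : b = ⟨n-1, klastlt⟩
              · simp only [hb, if_pos rfl]
                simp only [cvec]
                exact cvec_inl_sum hn1
              · simp only [if_neg hb]
                simp [cvec]
    · rw [cvec_dot hn1]
      have u1 : uv n (Sum.inl ⟨n, by omega⟩) = 2*n := by simp [uv]
      have u2 : uv n (Sum.inl ⟨0, by omega⟩) = -(2*n) := by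
        simp only [uv]; rw [if_neg]; omega
      rw [u1, u2]
      ring
end
end
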